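/- arXiv:1706.07973 — 7 statements merged into one kernel-verified Lean document; each statement's English description precedes it below -/
import Mathlib

section
/- Let m ∈ ℕ and w₀ ∈ ℝ^m. For all ε > 0, there exist points w₁, …, w_{2^m} in the closed ball of radius 2√m·ε around w₀ such that for any points w̃₁, …, w̃_{2^m} with ‖wᵢ − w̃ᵢ‖ < ε for all i, the open ball B(w₀, ε) is contained in the convex hull of {w̃₁, …, w̃_{2^m}}. -/
open Metric
open scoped RealInnerProductSpace

/-- Perturbed convex hull lemma: there are `2^m` points in the closed ball of radius
`2√m·ε` around `w₀` such that any `ε`-perturbations of them have convex hull containing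
the open ball `B(w₀, ε)`. -/
theorem stmt0 (m : ℕ) (w₀ : EuclideanSpace ℝ (Fin m)) (ε : ℝ) (hε : 0 < ε) :
    ∃ w : Fin (2 ^ m) → EuclideanSpace ℝ (Fin m),
      (∀ i, w i ∈ closedBall w₀ (2 * Real.sqrt m * ε)) ∧
      ∀ w' : Fin (2 ^ m) → EuclideanSpace ℝ (Fin m),
        (∀ i, ‖w i - w' i‖ < ε) →
        ball w₀ ε ⊆ convexHull ℝ (Set.range w') := by
  classical
  set σ : Fin 2 → ℝ := fun k => if k = 0 then 1 else -1 with hσ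
  have hσabs : ∀ k, |σ k| = 1 := by
    intro k; fin_cases k <;> simp [hσ]
  set w : Fin (2 ^ m) → EuclideanSpace ℝ (Fin m) :=
    fun i => (WithLp.toLp 2 (fun j => w₀ j + 2 * ε * σ (finFunctionFinEquiv.symm i j)) :
      EuclideanSpace ℝ (Fin m)) with hw
  have hwsub : ∀ i j, (w i - w₀) j = 2 * ε * σ (finFunctionFinEquiv.symm i j) := by
    intro i j
    show w i j - w₀ j = _
    simp [hw]
  refine ⟨w, ?_, ?_⟩
  · intro i
    rw [mem_closedBall, dist_eq_norm, EuclideanSpace.norm_eq]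
    have hj : ∀ j ∈ Finset.univ, ‖(w i - w₀) j‖ ^ 2 = (2 * ε)^2 := by
      intro j _
      rw [Real.norm_eq_abs, hwsub, abs_mul, hσabs, mul_one,
        abs_of_pos (by positivity : (0:ℝ) < 2 * ε)]
    rw [Finset.sum_congr rfl hj, Finset.sum_const]
    simp only [Finset.card_univ, Fintype.card_fin, nsmul_eq_mul]
    rw [Real.sqrt_mul (Nat.cast_nonneg m), Real.sqrt_sq (by positivity : (0:ℝ) ≤ 2 * ε),
      show 2 * Real.sqrt m * ε = Real.sqrt m * (2 * ε) by ring]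
  · intro w' hw' x hx
    by_contra hxC
    have hclosed : IsClosed (convexHull ℝ (Set.range w')) :=
      (Set.finite_range w').isClosed_convexHull (𝕜 := ℝ)
    have hconv : Convex ℝ (convexHull ℝ (Set.range w')) := convex_convexHull ℝ _
    obtain ⟨f, c, hfx, hfC⟩ := geometric_hahn_banach_point_closed hconv hclosed hxC
    set u : EuclideanSpace ℝ (Fin m) :=
      (InnerProductSpace.toDual ℝ (EuclideanSpace ℝ (Fin m))).symm f with hu
    have hfu : ∀ v, f v = ⟪u, v⟫ := fun v => (InnerProductSpace.toDual_symm_apply).symm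
    set N : ℝ := ∑ j, |u j| with hN
    have hinner : ∀ v₁ v₂ : EuclideanSpace ℝ (Fin m), ⟪v₁, v₂⟫ = ∑ j, v₁ j * v₂ j := by
      intro v₁ v₂; simp [PiLp.inner_apply, RCLike.inner_apply]; exact Finset.sum_congr rfl fun _ _ => mul_comm _ _
    have huN : ‖u‖ ≤ N := by
      rw [EuclideanSpace.norm_eq]
      have : ∑ j, ‖u j‖ ^ 2 ≤ N ^ 2 := by
        have hle : ∀ j ∈ Finset.univ, ‖u j‖ ^ 2 ≤ N * |u j| := by
          intro j _
          have h1 : |u j| ≤ N :=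
            Finset.single_le_sum (fun j _ => abs_nonneg (u j)) (Finset.mem_univ j)
          rw [Real.norm_eq_abs, sq]
          exact mul_le_mul_of_nonneg_right h1 (abs_nonneg _)
        calc ∑ j, ‖u j‖ ^ 2 ≤ ∑ j, N * |u j| := Finset.sum_le_sum hle
          _ = N ^ 2 := by rw [← Finset.mul_sum, ← hN, sq]
      calc Real.sqrt (∑ j, ‖u j‖^2) ≤ Real.sqrt (N^2) := Real.sqrt_le_sqrt this
        _ = N := Real.sqrt_sq (by positivity)
    -- choose the sign vector
    set b : Fin m → Fin 2 := fun j => if 0 ≤ u j then 1 else 0 with hb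
    set i : Fin (2 ^ m) := finFunctionFinEquiv b with hi
    have hsign : ∀ j, u j * σ (finFunctionFinEquiv.symm i j) = -|u j| := by
      intro j
      rw [hi, Equiv.symm_apply_apply, hb]
      by_cases h : 0 ≤ u j
      · simp [h, hσ, abs_of_nonneg h]
      · push_neg at h
        simp [h.not_ge, hσ, abs_of_neg h]
    have hkey : ⟪u, w i - w₀⟫ = -(2 * ε * N) := by
      rw [hinner]
      have hterm : ∀ j ∈ Finset.univ, u j * (w i - w₀) j = 2 * ε * (-|u j|) := by
        intro j _
        rw [hwsub]
        calc u j * (2 * ε * σ (finFunctionFinEquiv.symm i j))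
            = 2 * ε * (u j * σ (finFunctionFinEquiv.symm i j)) := by ring
          _ = 2 * ε * (-|u j|) := by rw [hsign j]
      rw [Finset.sum_congr rfl hterm]
      simp only [mul_neg, Finset.sum_neg_distrib, ← Finset.mul_sum, ← hN]
    have hne : u ≠ 0 := by
      intro h0
      have h1 : f x = 0 := by rw [hfu, h0, inner_zero_left]
      have h2 : f (w' i) = 0 := by rw [hfu, h0, inner_zero_left]
      have := hfC (w' i) (subset_convexHull ℝ _ (Set.mem_range_self i))
      linarith
    have hupos : 0 < ‖u‖ := norm_pos_iff.mpr hne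
    have hNpos : 0 < N := lt_of_lt_of_le hupos huN
    -- f (w' i) < f w₀ - ε * N
    have h1 : f (w' i) < f w₀ - ε * N := by
      have e1 : f (w' i) = f (w i) + ⟪u, w' i - w i⟫ := by
        rw [hfu, hfu, inner_sub_right]; ring
      have e2 : f (w i) = f w₀ + ⟪u, w i - w₀⟫ := by
        rw [hfu, hfu, inner_sub_right]; ring
      have e3 : ⟪u, w' i - w i⟫ < ε * ‖u‖ := by
        calc ⟪u, w' i - w i⟫ ≤ ‖u‖ * ‖w' i - w i‖ := real_inner_le_norm _ _
          _ < ‖u‖ * ε := by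
              have := hw' i
              rw [norm_sub_rev] at this
              exact mul_lt_mul_of_pos_left this hupos
          _ = ε * ‖u‖ := mul_comm _ _
      have e4 : ε * ‖u‖ ≤ ε * N := mul_le_mul_of_nonneg_left huN hε.le
      rw [e1, e2, hkey]
      linarith
    -- f x > f w₀ - ε * N
    have h2 : f w₀ - ε * N < f x := by
      have e1 : f x = f w₀ + ⟪u, x - w₀⟫ := by
        rw [hfu, hfu, inner_sub_right]; ring
      have e3 : -(ε * ‖u‖) < ⟪u, x - w₀⟫ := by
        have : |⟪u, x - w₀⟫| ≤ ‖u‖ * ‖x - w₀‖ := abs_real_inner_le_norm _ _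
        have hxd : ‖x - w₀‖ < ε := by rwa [← dist_eq_norm, ← mem_ball]
        have : ‖u‖ * ‖x - w₀‖ < ‖u‖ * ε := mul_lt_mul_of_pos_left hxd hupos
        have habs : |⟪u, x - w₀⟫| < ε * ‖u‖ := by
          calc |⟪u, x - w₀⟫| ≤ ‖u‖ * ‖x - w₀‖ := abs_real_inner_le_norm _ _
            _ < ‖u‖ * ε := mul_lt_mul_of_pos_left hxd hupos
            _ = ε * ‖u‖ := mul_comm _ _
        linarith [neg_abs_le ⟪u, x - w₀⟫, habs]
      have e4 : ε * ‖u‖ ≤ ε * N := mul_le_mul_of_nonneg_left huN hε.le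
      rw [e1]
      linarith
    have h3 := hfC (w' i) (subset_convexHull ℝ _ (Set.mem_range_self i))
    linarith
end

section
/- Let f : X → X be continuous on a compact metric space with μ ↦ h_μ(f) upper semi-continuous, Φ ∈ C(X, ℝ^m), and let (Φ_{ε_n})_n be a sequence of continuous potentials with ‖Φ − Φ_{ε_n}‖_∞ < ε_n and ε_n → 0. Fix w₀ ∈ Rot(Φ) and α ≥ 1. Then h^u_{Φ_{ε_n}}(w₀, α·ε_n) → H_Φ(w₀) as n → ∞. -/
open MeasureTheory

variable {X : Type*} [MetricSpace X] [CompactSpace X] [MeasurableSpace X] [BorelSpace X]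

/-- `μ` is an `f`-invariant Borel probability measure. -/
def InvariantProb (f : X → X) (μ : ProbabilityMeasure X) : Prop :=
  (μ : Measure X).map f = (μ : Measure X)

/-- The generalized rotation set of a potential `Φ : X → ℝ^m` with respect to `f`. -/
def Rot (f : X → X) {m : ℕ} (Φ : X → EuclideanSpace ℝ (Fin m)) :
    Set (EuclideanSpace ℝ (Fin m)) :=
  {w | ∃ μ : ProbabilityMeasure X, InvariantProb f μ ∧ (∫ x, Φ x ∂(μ : Measure X)) = w}

/-- The localized entropy `H(w) = sup { h_μ(f) : μ invariant, rv(μ) = w }`, where the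
measure-theoretic entropy is given by the function `h`. -/
noncomputable def locEnt (f : X → X) (h : ProbabilityMeasure X → ℝ) {m : ℕ}
    (Φ : X → EuclideanSpace ℝ (Fin m)) (w : EuclideanSpace ℝ (Fin m)) : ℝ :=
  sSup (h '' {μ | InvariantProb f μ ∧ (∫ x, Φ x ∂(μ : Measure X)) = w})

/-- The maximum local entropy of `Ψ` on the closed ball `B̄(w₀, r)`. -/
noncomputable def hu (f : X → X) (h : ProbabilityMeasure X → ℝ) {m : ℕ}
    (Ψ : X → EuclideanSpace ℝ (Fin m)) (w₀ : EuclideanSpace ℝ (Fin m)) (r : ℝ) : ℝ :=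
  sSup (locEnt f h Ψ '' (Metric.closedBall w₀ r ∩ Rot f Ψ))

/-- The minimum local entropy of `Ψ` on the closed ball `B̄(w₀, r)`. -/
noncomputable def hl (f : X → X) (h : ProbabilityMeasure X → ℝ) {m : ℕ}
    (Ψ : X → EuclideanSpace ℝ (Fin m)) (w₀ : EuclideanSpace ℝ (Fin m)) (r : ℝ) : ℝ :=
  sInf (locEnt f h Ψ '' (Metric.closedBall w₀ r ∩ Rot f Ψ))

open Filter Topology Set NNReal ENNReal


lemma diag (u : Finset ℕ → Set X) (μ : ℕ → ProbabilityMeasure X) :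
    ∃ φ : ℕ → ℕ, StrictMono φ ∧ ∃ L : Finset ℕ → ℝ≥0,
      ∀ s, Tendsto (fun j => μ (φ j) (u s)) atTop (𝓝 (L s)) := by
  have hcpt : IsCompact (Set.univ.pi (fun _ : Finset ℕ => Set.Icc (0:ℝ≥0) 1)) :=
    isCompact_univ_pi fun _ => isCompact_Icc
  have hseq := hcpt.isSeqCompact (x := fun j s => μ j (u s)) ?_
  · obtain ⟨L, -, φ, hφ, hconv⟩ := hseq
    refine ⟨φ, hφ, fun s => L s, fun s => ?_⟩
    exact (continuous_apply s).continuousAt.tendsto.comp hconv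
  · intro j
    exact fun s _ => ⟨zero_le, (μ j).apply_le_one _⟩

lemma coe_union_le (ν : ProbabilityMeasure X) (A B : Set X) : ν (A ∪ B) ≤ ν A + ν B := by
  rw [← ENNReal.coe_le_coe, ENNReal.coe_add]
  simp only [ProbabilityMeasure.ennreal_coeFn_eq_coeFn_toMeasure]
  exact measure_union_le A B

lemma coe_union_eq (ν : ProbabilityMeasure X) {A B : Set X} (h : Disjoint A B)
    (hB : MeasurableSet B) : ν (A ∪ B) = ν A + ν B := by
  rw [← ENNReal.coe_inj, ENNReal.coe_add]
  simp only [ProbabilityMeasure.ennreal_coeFn_eq_coeFn_toMeasure]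
  exact measure_union h hB

/-- Sequential compactness of the space of Borel probability measures on a
compact metric space. -/
lemma prob_seq_compact (μ : ℕ → ProbabilityMeasure X) :
    ∃ ν : ProbabilityMeasure X, ∃ φ : ℕ → ℕ, StrictMono φ ∧
      Tendsto (μ ∘ φ) atTop (𝓝 ν) := by
  have : Nonempty X := (μ 0).nonempty
  -- countable basis
  obtain ⟨B, hBc, -, hB⟩ := TopologicalSpace.exists_countable_basis X
  have hBne : B.Nonempty := by
    obtain ⟨t, htB, -, -⟩ :=
      hB.exists_subset_of_mem_open (mem_univ (Classical.arbitrary X)) isOpen_univ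
    exact ⟨t, htB⟩
  obtain ⟨b, hr⟩ := hBc.exists_eq_range hBne
  set u : Finset ℕ → Set X := fun s => ⋃ i ∈ s, b i with hu
  have hbopen : ∀ i, IsOpen (b i) := fun i => hB.isOpen (by rw [hr]; exact mem_range_self i)
  have huopen : ∀ s, IsOpen (u s) := fun s => isOpen_biUnion fun i _ => hbopen i
  have humono : ∀ {s t : Finset ℕ}, s ⊆ t → u s ⊆ u t := fun hst =>
    Set.biUnion_subset_biUnion_left hst
  have huunion : ∀ s t : Finset ℕ, u (s ∪ t) = u s ∪ u t := fun s t =>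
    Finset.set_biUnion_union s t b
  -- P1
  have P1 : ∀ {K G : Set X}, IsCompact K → IsOpen G → K ⊆ G →
      ∃ s : Finset ℕ, K ⊆ u s ∧ u s ⊆ G := by
    intro K G hK hG hKG
    have hx : ∀ x ∈ K, ∃ i : {i : ℕ // b i ⊆ G}, x ∈ b i := by
      intro x hxK
      obtain ⟨t, htB, hxt, htG⟩ := hB.exists_subset_of_mem_open (hKG hxK) hG
      rw [hr] at htB
      obtain ⟨i, rfl⟩ := htB
      exact ⟨⟨i, htG⟩, hxt⟩
    obtain ⟨T, hT⟩ := hK.elim_finite_subcover (fun i : {i : ℕ // b i ⊆ G} => b i)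
      (fun i => hbopen i) (fun x hxK => by simpa using hx x hxK)
    refine ⟨T.image Subtype.val, ?_, ?_⟩
    · intro x hxK
      have h2 := hT hxK
      simp only [Set.mem_iUnion] at h2
      obtain ⟨i, hiT, hxi⟩ := h2
      exact mem_biUnion (Finset.mem_image.mpr ⟨i, hiT, rfl⟩) hxi
    · refine Set.iUnion₂_subset ?_
      intro i hi
      obtain ⟨j, -, rfl⟩ := Finset.mem_image.mp hi
      exact j.2
  obtain ⟨φ, hφ, L, hL⟩ := diag u μ
  have L_le_one : ∀ s, L s ≤ 1 := fun s =>
    le_of_tendsto (hL s) (Eventually.of_forall fun j => (μ (φ j)).apply_le_one _)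
  have L_mono : ∀ {s t : Finset ℕ}, u s ⊆ u t → L s ≤ L t := fun {s t} hst =>
    le_of_tendsto_of_tendsto' (hL s) (hL t)
      (fun j => (μ (φ j)).apply_mono hst)
  have L_union_le : ∀ s t : Finset ℕ, L (s ∪ t) ≤ L s + L t := by
    intro s t
    refine le_of_tendsto_of_tendsto' (hL (s ∪ t)) ((hL s).add (hL t)) fun j => ?_
    rw [huunion]
    exact coe_union_le _ _ _
  have L_add_le : ∀ {s t w : Finset ℕ}, Disjoint (u s) (u t) → u s ∪ u t ⊆ u w →
      L s + L t ≤ L w := by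
    intro s t w hdisj hsub
    refine le_of_tendsto_of_tendsto' ((hL s).add (hL t)) (hL w) fun j => ?_
    rw [← coe_union_eq _ hdisj (huopen t).measurableSet]
    exact (μ (φ j)).apply_mono hsub
  -- the content
  set Λ : TopologicalSpace.Compacts X → ℝ≥0 :=
    fun K => sInf (L '' {s | (K : Set X) ⊆ u s}) with hΛ
  have hne : ∀ K : TopologicalSpace.Compacts X, (L '' {s | (K : Set X) ⊆ u s}).Nonempty := by
    intro K
    obtain ⟨s, hs, -⟩ := P1 K.2 isOpen_univ (subset_univ _)
    exact ⟨L s, s, hs, rfl⟩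
  have hΛ_le : ∀ (K : TopologicalSpace.Compacts X) {s : Finset ℕ}, (K : Set X) ⊆ u s →
      Λ K ≤ L s := fun K {s} hs => csInf_le (OrderBot.bddBelow _) ⟨s, hs, rfl⟩
  have sup_le' : ∀ K₁ K₂ : TopologicalSpace.Compacts X, Λ (K₁ ⊔ K₂) ≤ Λ K₁ + Λ K₂ := by
    intro K₁ K₂
    refine le_of_forall_pos_le_add ?_
    intro ε hε
    have hε2 : 0 < ε / 2 := by positivity
    obtain ⟨x, ⟨s₁, hs₁, rfl⟩, hx⟩ :=
      exists_lt_of_csInf_lt (hne K₁) (lt_add_of_pos_right (Λ K₁) hε2)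
    obtain ⟨y, ⟨s₂, hs₂, rfl⟩, hy⟩ :=
      exists_lt_of_csInf_lt (hne K₂) (lt_add_of_pos_right (Λ K₂) hε2)
    have hsub : ((K₁ ⊔ K₂ : TopologicalSpace.Compacts X) : Set X) ⊆ u (s₁ ∪ s₂) := by
      rw [huunion]
      exact Set.union_subset_union hs₁ hs₂
    calc Λ (K₁ ⊔ K₂) ≤ L (s₁ ∪ s₂) := hΛ_le _ hsub
      _ ≤ L s₁ + L s₂ := L_union_le s₁ s₂
      _ ≤ (Λ K₁ + ε / 2) + (Λ K₂ + ε / 2) := add_le_add hx.le hy.le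
      _ = Λ K₁ + Λ K₂ + ε := by rw [add_add_add_comm, add_halves]
  have mono' : ∀ K₁ K₂ : TopologicalSpace.Compacts X, (K₁ : Set X) ⊆ K₂ → Λ K₁ ≤ Λ K₂ := by
    intro K₁ K₂ h
    refine le_csInf (hne K₂) ?_
    rintro v ⟨s, hs, rfl⟩
    exact hΛ_le K₁ (h.trans hs)
  have sup_disjoint' : ∀ K₁ K₂ : TopologicalSpace.Compacts X, Disjoint (K₁ : Set X) K₂ →
      IsClosed (K₁ : Set X) → IsClosed (K₂ : Set X) → Λ (K₁ ⊔ K₂) = Λ K₁ + Λ K₂ := by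
    intro K₁ K₂ hdis h1 h2
    refine le_antisymm (sup_le' K₁ K₂) ?_
    refine le_csInf (hne _) ?_
    rintro v ⟨s, hs, rfl⟩
    rw [TopologicalSpace.Compacts.coe_sup] at hs
    obtain ⟨δ, hδ, hthick⟩ := hdis.exists_thickenings K₁.2 h2
    obtain ⟨s₁, hK₁, hs₁⟩ := P1 K₁.2 ((huopen s).inter Metric.isOpen_thickening)
      (Set.subset_inter (Set.subset_union_left.trans hs) (Metric.self_subset_thickening hδ _))
    obtain ⟨s₂, hK₂, hs₂⟩ := P1 K₂.2 ((huopen s).inter Metric.isOpen_thickening)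
      (Set.subset_inter (Set.subset_union_right.trans hs) (Metric.self_subset_thickening hδ _))
    have hd : Disjoint (u s₁) (u s₂) :=
      hthick.mono (hs₁.trans Set.inter_subset_right) (hs₂.trans Set.inter_subset_right)
    calc Λ K₁ + Λ K₂ ≤ L s₁ + L s₂ := add_le_add (hΛ_le _ hK₁) (hΛ_le _ hK₂)
      _ ≤ L s := L_add_le hd (Set.union_subset (hs₁.trans Set.inter_subset_left)
          (hs₂.trans Set.inter_subset_left))
  set μC : Content X := ⟨Λ, mono', sup_disjoint', sup_le'⟩ with hμC
  have key1 : ∀ s : Finset ℕ, Set.univ ⊆ u s → L s = 1 := by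
    intro s hs
    have husv : u s = Set.univ := Set.eq_univ_of_univ_subset hs
    refine tendsto_nhds_unique (hL s) ?_
    simp only [husv, ProbabilityMeasure.coeFn_univ]
    exact tendsto_const_nhds
  have Λ_top : Λ ⊤ = 1 := by
    obtain ⟨s, hs, -⟩ := P1 isCompact_univ isOpen_univ (subset_refl _)
    refine le_antisymm ?_ ?_
    · exact (hΛ_le ⊤ hs).trans (key1 s hs).le
    · refine le_csInf (hne ⊤) ?_
      rintro v ⟨t, ht, rfl⟩
      exact (key1 t ht).ge
  have Λ_le_one : ∀ K : TopologicalSpace.Compacts X, Λ K ≤ 1 :=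
    fun K => (mono' K ⊤ (subset_univ _)).trans Λ_top.le
  have hinner : ∀ {G : Set X} (hG : IsOpen G),
      μC.measure G = μC.innerContent ⟨G, hG⟩ := by
    intro G hG
    rw [μC.measure_apply hG.measurableSet, μC.outerMeasure_of_isOpen G hG]
  have hprob : IsProbabilityMeasure μC.measure := by
    constructor
    rw [hinner isOpen_univ]
    refine le_antisymm (iSup₂_le fun K _ => ?_) ?_
    · show ((Λ K : ℝ≥0) : ℝ≥0∞) ≤ 1
      exact_mod_cast Λ_le_one K
    · have h2 := μC.le_innerContent ⊤ ⟨Set.univ, isOpen_univ⟩ (subset_univ _)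
      refine le_trans (le_of_eq ?_) h2
      show (1 : ℝ≥0∞) = ((Λ ⊤ : ℝ≥0) : ℝ≥0∞)
      rw [Λ_top]; rfl
  refine ⟨⟨μC.measure, hprob⟩, φ, hφ, ?_⟩
  apply MeasureTheory.tendsto_of_forall_isOpen_le_liminf
  intro G hG
  have key : ∀ K : TopologicalSpace.Compacts X, (K : Set X) ⊆ G →
      Λ K ≤ atTop.liminf (fun j => μ (φ j) G) := by
    intro K hK
    obtain ⟨s, hKs, hsG⟩ := P1 K.2 hG hK
    refine (hΛ_le K hKs).trans ?_
    have hb : IsBoundedUnder (· ≤ ·) atTop (fun j => μ (φ j) G) :=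
      isBoundedUnder_of ⟨1, fun j => (μ (φ j)).apply_le_one _⟩
    have hb2 : IsBoundedUnder (· ≤ ·) atTop (fun j => μ (φ j) (u s)) :=
      isBoundedUnder_of ⟨1, fun j => (μ (φ j)).apply_le_one _⟩
    have hc : IsCoboundedUnder (· ≥ ·) atTop (fun j => μ (φ j) (u s)) :=
      hb2.isCoboundedUnder_ge
    have hmono : atTop.liminf (fun j => μ (φ j) (u s)) ≤
        atTop.liminf (fun j => μ (φ j) G) :=
      liminf_le_liminf (Eventually.of_forall fun j => (μ (φ j)).apply_mono hsG)
        (isBoundedUnder_of ⟨0, fun j => zero_le⟩) hb.isCoboundedUnder_ge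
    rwa [(hL s).liminf_eq] at hmono
  rw [← ENNReal.coe_le_coe]
  refine le_trans (le_of_eq (ProbabilityMeasure.ennreal_coeFn_eq_coeFn_toMeasure
    (⟨μC.measure, hprob⟩ : ProbabilityMeasure X) G)) ?_
  show μC.measure G ≤ _
  rw [hinner hG]
  refine iSup₂_le fun K hK => ?_
  show ((Λ K : ℝ≥0) : ℝ≥0∞) ≤ _
  exact_mod_cast key K hK


lemma myIntegrable {m : ℕ} {Ψ : X → EuclideanSpace ℝ (Fin m)} (hΨ : Continuous Ψ)
    (μ : ProbabilityMeasure X) : Integrable Ψ (μ : Measure X) :=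
  (BoundedContinuousFunction.mkOfCompact ⟨Ψ, hΨ⟩).integrable _

lemma integral_tendsto {m : ℕ} {Φ : X → EuclideanSpace ℝ (Fin m)} (hΦ : Continuous Φ)
    {ν : ProbabilityMeasure X} {μs : ℕ → ProbabilityMeasure X}
    (hconv : Tendsto μs atTop (𝓝 ν)) :
    Tendsto (fun k => ∫ x, Φ x ∂(μs k : Measure X)) atTop
      (𝓝 (∫ x, Φ x ∂(ν : Measure X))) := by
  set E := (PiLp.continuousLinearEquiv 2 ℝ (fun _ : Fin m => ℝ))
  have hE : ∀ μ : ProbabilityMeasure X, ∀ i : Fin m,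
      (E : EuclideanSpace ℝ (Fin m) →L[ℝ] (Fin m → ℝ)) (∫ x, Φ x ∂(μ : Measure X)) i
        = ∫ x, Φ x i ∂(μ : Measure X) := by
    intro μ i
    rw [← ContinuousLinearMap.integral_comp_comm _ (myIntegrable hΦ μ)]
    have hint2 : Integrable (fun x => (E : EuclideanSpace ℝ (Fin m) →L[ℝ] (Fin m → ℝ)) (Φ x))
        (μ : Measure X) :=
      (E : EuclideanSpace ℝ (Fin m) →L[ℝ] (Fin m → ℝ)).integrable_comp (myIntegrable hΦ μ)
    have h2 := ContinuousLinearMap.integral_comp_comm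
      (ContinuousLinearMap.proj (R := ℝ) (φ := fun _ : Fin m => ℝ) i) hint2
    simp only [ContinuousLinearMap.proj_apply] at h2
    exact h2.symm
  have key : Tendsto (fun k => (E : EuclideanSpace ℝ (Fin m) →L[ℝ] (Fin m → ℝ))
      (∫ x, Φ x ∂(μs k : Measure X))) atTop
      (𝓝 ((E : EuclideanSpace ℝ (Fin m) →L[ℝ] (Fin m → ℝ)) (∫ x, Φ x ∂(ν : Measure X)))) := by
    rw [tendsto_pi_nhds]
    intro i
    simp only [hE]
    have hgc : Continuous (fun x => Φ x i) := (continuous_apply i).comp ((PiLp.continuous_ofLp 2 _).comp hΦ)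
    have := ProbabilityMeasure.tendsto_iff_forall_integral_tendsto.mp hconv
      (BoundedContinuousFunction.mkOfCompact ⟨fun x => Φ x i, hgc⟩)
    simpa using this
  have := (E.symm.continuous.tendsto _).comp key
  have h2 : Tendsto (fun k => ∫ x, Φ x ∂(μs k : Measure X)) atTop
      (𝓝 (E.symm (E (∫ x, Φ x ∂(ν : Measure X))))) := this.congr fun k => by simp
  simpa using h2

/-- Proposition (convergence of maximal local entropies): if `(Φ_{ε_n})` is an
approximating sequence of `Φ`, `w₀ ∈ Rot(Φ)` and `α ≥ 1`, then
`h^u_{Φ_{ε_n}}(w₀, α ε_n) → H_Φ(w₀)`. -/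
theorem stmt7 (m : ℕ) (f : X → X) (hf : Continuous f)
    (h : ProbabilityMeasure X → ℝ)
    (husc : UpperSemicontinuousOn h {μ | InvariantProb f μ})
    (hbdd : BddAbove (Set.range h))
    (Φ : X → EuclideanSpace ℝ (Fin m)) (hΦ : Continuous Φ)
    (ε : ℕ → ℝ) (hεpos : ∀ n, 0 < ε n) (hεto : Filter.Tendsto ε Filter.atTop (nhds 0))
    (Φseq : ℕ → X → EuclideanSpace ℝ (Fin m)) (hΦseqc : ∀ n, Continuous (Φseq n))
    (happrox : ∀ n x, ‖Φ x - Φseq n x‖ < ε n)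
    (w₀ : EuclideanSpace ℝ (Fin m)) (hw₀ : w₀ ∈ Rot f Φ)
    (α : ℝ) (hα : 1 ≤ α) :
    Filter.Tendsto (fun n => hu f h (Φseq n) w₀ (α * ε n)) Filter.atTop
      (nhds (locEnt f h Φ w₀)) := by
  classical
  obtain ⟨μ₀, hμ₀inv, hμ₀int⟩ := hw₀
  obtain ⟨b0, hb0⟩ := hbdd
  have hBdd : ∀ S : Set (ProbabilityMeasure X), BddAbove (h '' S) := fun S => by
    refine ⟨b0, ?_⟩
    rintro y ⟨μ, -, rfl⟩
    exact hb0 (mem_range_self μ)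
  have locEnt_le_bound : ∀ (Ψ : X → EuclideanSpace ℝ (Fin m)) (w : EuclideanSpace ℝ (Fin m)),
      locEnt f h Ψ w ≤ max b0 0 := by
    intro Ψ w
    by_cases hS : (h '' {μ | InvariantProb f μ ∧ (∫ x, Ψ x ∂(μ : Measure X)) = w}).Nonempty
    · rw [locEnt]
      refine csSup_le hS ?_
      rintro y ⟨μ, -, rfl⟩
      exact le_max_of_le_left (hb0 (mem_range_self μ))
    · rw [locEnt, not_nonempty_iff_eq_empty.mp hS, Real.sSup_empty]
      exact le_max_right _ _
  have huBdd : ∀ n, BddAbove (locEnt f h (Φseq n) ''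
      (Metric.closedBall w₀ (α * ε n) ∩ Rot f (Φseq n))) := by
    intro n
    refine ⟨max b0 0, ?_⟩
    rintro y ⟨w, -, rfl⟩
    exact locEnt_le_bound _ _
  have hdist : ∀ n (μ : ProbabilityMeasure X),
      ‖(∫ x, Φseq n x ∂(μ : Measure X)) - ∫ x, Φ x ∂(μ : Measure X)‖ ≤ ε n := by
    intro n μ
    rw [← integral_sub (myIntegrable (hΦseqc n) μ) (myIntegrable hΦ μ)]
    have hbound : ∀ᵐ x ∂(μ : Measure X), ‖Φseq n x - Φ x‖ ≤ ε n :=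
      Eventually.of_forall fun x => (norm_sub_rev (Φseq n x) (Φ x) ▸ (happrox n x).le)
    have := norm_integral_le_of_norm_le_const hbound
    simpa using this
  -- membership of approximated integrals in the ball
  have hmem : ∀ n (μ : ProbabilityMeasure X), InvariantProb f μ →
      (∫ x, Φ x ∂(μ : Measure X)) = w₀ →
      (∫ x, Φseq n x ∂(μ : Measure X)) ∈
        Metric.closedBall w₀ (α * ε n) ∩ Rot f (Φseq n) := by
    intro n μ hinv hint
    constructor
    · rw [Metric.mem_closedBall, dist_eq_norm]
      have h1 : ‖(∫ x, Φseq n x ∂(μ : Measure X)) - w₀‖ ≤ ε n := by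
        rw [← hint]; exact hdist n μ
      exact h1.trans (le_mul_of_one_le_left (hεpos n).le hα)
    · exact ⟨μ, hinv, rfl⟩
  have lower : ∀ n, locEnt f h Φ w₀ ≤ hu f h (Φseq n) w₀ (α * ε n) := by
    intro n
    rw [locEnt]
    refine csSup_le ⟨h μ₀, μ₀, ⟨hμ₀inv, hμ₀int⟩, rfl⟩ ?_
    rintro y ⟨μ, ⟨hinv, hint⟩, rfl⟩
    have h1 : h μ ≤ locEnt f h (Φseq n) (∫ x, Φseq n x ∂(μ : Measure X)) := by
      rw [locEnt]
      exact le_csSup (hBdd _) ⟨μ, ⟨hinv, rfl⟩, rfl⟩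
    refine h1.trans ?_
    rw [hu]
    exact le_csSup (huBdd n) ⟨_, hmem n μ hinv hint, rfl⟩
  have claimA : ∀ δ : ℝ, 0 < δ → ∃ r > (0:ℝ), ∀ μ : ProbabilityMeasure X, InvariantProb f μ →
      ‖(∫ x, Φ x ∂(μ : Measure X)) - w₀‖ ≤ r → h μ ≤ locEnt f h Φ w₀ + δ := by
    intro δ hδ
    by_contra hcon
    push_neg at hcon
    choose! ρ hρ1 hρ2 hρ3 using fun k : ℕ => hcon (1/((k:ℝ)+1)) (by positivity)
    obtain ⟨ν, ψ, hψ, hconv⟩ := prob_seq_compact ρ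
    have hmapeq : ∀ k, ProbabilityMeasure.map (ρ (ψ k)) hf.measurable.aemeasurable
        = ρ (ψ k) := by
      intro k
      apply ProbabilityMeasure.toMeasure_injective
      rw [ProbabilityMeasure.toMeasure_map]
      exact hρ1 (ψ k)
    have hνinv : InvariantProb f ν := by
      have h2 := ProbabilityMeasure.tendsto_map_of_tendsto_of_continuous (ρ ∘ ψ) ν hconv hf
      have h3 : Tendsto (fun k => ρ (ψ k)) atTop
          (𝓝 (ProbabilityMeasure.map ν hf.measurable.aemeasurable)) :=
        Tendsto.congr (fun k => hmapeq k) h2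
      have h4 : ProbabilityMeasure.map ν hf.measurable.aemeasurable = ν :=
        tendsto_nhds_unique h3 hconv
      have h5 : ((ProbabilityMeasure.map ν hf.measurable.aemeasurable : ProbabilityMeasure X)
          : Measure X) = (ν : Measure X) := congrArg _ h4
      rw [ProbabilityMeasure.toMeasure_map] at h5
      exact h5
    have hto : Tendsto (fun k => ∫ x, Φ x ∂(ρ (ψ k) : Measure X)) atTop
        (𝓝 (∫ x, Φ x ∂(ν : Measure X))) := integral_tendsto hΦ hconv
    have hto2 : Tendsto (fun k => ∫ x, Φ x ∂(ρ (ψ k) : Measure X)) atTop (𝓝 w₀) := by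
      rw [tendsto_iff_dist_tendsto_zero]
      refine squeeze_zero (fun k => dist_nonneg) (fun k => ?_)
        tendsto_one_div_add_atTop_nhds_zero_nat
      have hb1 : dist (∫ x, Φ x ∂(ρ (ψ k) : Measure X)) w₀ ≤ 1/((ψ k : ℝ)+1) := by
        rw [dist_eq_norm]
        exact hρ2 (ψ k)
      refine hb1.trans ?_
      have : ((k:ℝ)+1) ≤ ((ψ k : ℝ)+1) := by
        have hkk : k ≤ ψ k := hψ.le_apply
        have := (Nat.cast_le (α := ℝ)).mpr hkk
        linarith
      exact one_div_le_one_div_of_le (by positivity) this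
    have hνint : (∫ x, Φ x ∂(ν : Measure X)) = w₀ := tendsto_nhds_unique hto hto2
    have hνle : h ν ≤ locEnt f h Φ w₀ := by
      rw [locEnt]
      exact le_csSup (hBdd _) ⟨ν, ⟨hνinv, hνint⟩, rfl⟩
    have husc2 := husc ν hνinv (locEnt f h Φ w₀ + δ) (by linarith)
    have htend : Tendsto (fun k => ρ (ψ k)) atTop
        (𝓝[{μ' : ProbabilityMeasure X | InvariantProb f μ'}] ν) := by
      rw [tendsto_nhdsWithin_iff]
      exact ⟨hconv, Eventually.of_forall fun k => hρ1 (ψ k)⟩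
    obtain ⟨k, hk⟩ := (htend.eventually husc2).exists
    exact absurd hk (not_lt.mpr (hρ3 (ψ k)).le)
  have upper : ∀ δ : ℝ, 0 < δ → ∀ᶠ n in atTop,
      hu f h (Φseq n) w₀ (α * ε n) ≤ locEnt f h Φ w₀ + δ := by
    intro δ hδ
    obtain ⟨r, hr, hA⟩ := claimA δ hδ
    have hαpos : (0:ℝ) < 1 + α := by linarith
    filter_upwards [hεto.eventually_lt_const (show (0:ℝ) < r/(1+α) by positivity)] with n hn
    have hn' : ε n + α * ε n ≤ r := by
      have h2 : (1+α) * ε n < r := by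
        rw [mul_comm]
        exact (lt_div_iff₀ hαpos).mp hn
      nlinarith
    rw [hu]
    refine csSup_le ⟨_, ⟨_, hmem n μ₀ hμ₀inv hμ₀int, rfl⟩⟩ ?_
    rintro y ⟨w, ⟨hball, μw, hμwinv, hμwint⟩, rfl⟩
    rw [locEnt]
    refine csSup_le ⟨h μw, μw, ⟨hμwinv, hμwint⟩, rfl⟩ ?_
    rintro y ⟨μ, ⟨hinv, hint⟩, rfl⟩
    refine hA μ hinv ?_
    have t1 : ‖(∫ x, Φ x ∂(μ : Measure X)) - (∫ x, Φseq n x ∂(μ : Measure X))‖ ≤ ε n := by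
      rw [norm_sub_rev]
      exact hdist n μ
    have t2 : ‖(∫ x, Φseq n x ∂(μ : Measure X)) - w₀‖ ≤ α * ε n := by
      rw [hint, ← dist_eq_norm]
      exact hball
    calc ‖(∫ x, Φ x ∂(μ : Measure X)) - w₀‖
        = ‖((∫ x, Φ x ∂(μ : Measure X)) - (∫ x, Φseq n x ∂(μ : Measure X)))
            + ((∫ x, Φseq n x ∂(μ : Measure X)) - w₀)‖ := by rw [sub_add_sub_cancel]
      _ ≤ ‖(∫ x, Φ x ∂(μ : Measure X)) - (∫ x, Φseq n x ∂(μ : Measure X))‖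
            + ‖(∫ x, Φseq n x ∂(μ : Measure X)) - w₀‖ := norm_add_le _ _
      _ ≤ ε n + α * ε n := add_le_add t1 t2
      _ ≤ r := hn'
  rw [Metric.tendsto_nhds]
  intro δ hδ
  filter_upwards [upper (δ/2) (by positivity)] with n hn
  have hl := lower n
  rw [Real.dist_eq, abs_of_nonneg (by linarith)]
  linarith
end

section
/- Under the hypotheses of the previous statement, suppose additionally α > 1 and ε_{n+1} < ((α−1)/(α+1))·ε_n for all n. Then the sequence (h^u_{Φ_{ε_n}}(w₀, α·ε_n))_n is (weakly) decreasing. -/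
open MeasureTheory

variable {X : Type*} [MetricSpace X] [CompactSpace X] [MeasurableSpace X] [BorelSpace X]

private lemma int_close {m : ℕ} (g g' : X → EuclideanSpace ℝ (Fin m))
    (hg : Continuous g) (hg' : Continuous g') (μ : ProbabilityMeasure X) (C : ℝ)
    (hC : ∀ x, ‖g x - g' x‖ < C) :
    ‖(∫ x, g x ∂(μ : Measure X)) - ∫ x, g' x ∂(μ : Measure X)‖ ≤ C := by
  rw [← integral_sub (hg.integrable_of_hasCompactSupport (isClosed_tsupport g).isCompact)
    (hg'.integrable_of_hasCompactSupport (isClosed_tsupport g').isCompact)]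
  calc ‖∫ x, (g x - g' x) ∂(μ : Measure X)‖ ≤ C * ((μ : Measure X) Set.univ).toReal :=
        norm_integral_le_of_norm_le_const (Filter.Eventually.of_forall fun x => (hC x).le)
    _ = C := by simp

/-- If additionally `α > 1` and `ε_{n+1} < ((α−1)/(α+1)) ε_n` for all `n`, then the
sequence `(h^u_{Φ_{ε_n}}(w₀, α ε_n))_n` is (weakly) decreasing. -/
theorem stmt8 (m : ℕ) (f : X → X) (hf : Continuous f)
    (h : ProbabilityMeasure X → ℝ)
    (husc : UpperSemicontinuousOn h {μ | InvariantProb f μ})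
    (hbdd : BddAbove (Set.range h))
    (Φ : X → EuclideanSpace ℝ (Fin m)) (hΦ : Continuous Φ)
    (ε : ℕ → ℝ) (hεpos : ∀ n, 0 < ε n) (hεto : Filter.Tendsto ε Filter.atTop (nhds 0))
    (Φseq : ℕ → X → EuclideanSpace ℝ (Fin m)) (hΦseqc : ∀ n, Continuous (Φseq n))
    (happrox : ∀ n x, ‖Φ x - Φseq n x‖ < ε n)
    (w₀ : EuclideanSpace ℝ (Fin m)) (hw₀ : w₀ ∈ Rot f Φ)
    (α : ℝ) (hα : 1 < α) (hεrate : ∀ n, ε (n + 1) < (α - 1) / (α + 1) * ε n) :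
    Antitone (fun n => hu f h (Φseq n) w₀ (α * ε n)) := by
  obtain ⟨M, hM⟩ := hbdd
  have hlocbdd : ∀ (Ψ : X → EuclideanSpace ℝ (Fin m)) (w : EuclideanSpace ℝ (Fin m)),
      BddAbove (h '' {μ | InvariantProb f μ ∧ (∫ x, Ψ x ∂(μ : Measure X)) = w}) := by
    rintro Ψ w
    exact ⟨M, by rintro z ⟨ν, _, rfl⟩; exact hM ⟨ν, rfl⟩⟩
  have hbddn : ∀ k, BddAbove (locEnt f h (Φseq k) ''
      (Metric.closedBall w₀ (α * ε k) ∩ Rot f (Φseq k))) := by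
    intro k
    refine ⟨M, ?_⟩
    rintro y ⟨w, ⟨hwb, μ, hμinv, hμint⟩, rfl⟩
    refine csSup_le ⟨h μ, ⟨μ, ⟨hμinv, hμint⟩, rfl⟩⟩ ?_
    rintro z ⟨ν, _, rfl⟩; exact hM ⟨ν, rfl⟩
  apply antitone_nat_of_succ_le
  intro n
  show hu f h (Φseq (n+1)) w₀ (α * ε (n+1)) ≤ hu f h (Φseq n) w₀ (α * ε n)
  unfold hu
  obtain ⟨μ₀, hμ₀inv, hμ₀int⟩ := hw₀
  -- nonempty: the ball ∩ Rot for level n+1 is nonempty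
  have hne : ((Metric.closedBall w₀ (α * ε (n+1)) ∩ Rot f (Φseq (n+1)))).Nonempty := by
    refine ⟨∫ x, Φseq (n+1) x ∂(μ₀ : Measure X), ?_, μ₀, hμ₀inv, rfl⟩
    rw [Metric.mem_closedBall, dist_eq_norm]
    have h1 : ‖(∫ x, Φseq (n+1) x ∂(μ₀ : Measure X)) - ∫ x, Φ x ∂(μ₀ : Measure X)‖
        ≤ ε (n+1) := by
      refine int_close _ _ (hΦseqc _) hΦ μ₀ _ fun x => ?_
      rw [norm_sub_rev]; exact happrox _ x
    rw [hμ₀int] at h1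
    nlinarith [hεpos (n+1)]
  refine csSup_le (hne.image _) ?_
  rintro y ⟨w, ⟨hwb, hwrot⟩, rfl⟩
  obtain ⟨ν, hνinv, hνint⟩ := hwrot
  refine csSup_le ⟨h ν, ⟨ν, ⟨hνinv, hνint⟩, rfl⟩⟩ ?_
  rintro z ⟨μ, ⟨hμinv, hμint⟩, rfl⟩
  have key : (∫ x, Φseq n x ∂(μ : Measure X)) ∈
      Metric.closedBall w₀ (α * ε n) ∩ Rot f (Φseq n) := by
    refine ⟨?_, μ, hμinv, rfl⟩
    rw [Metric.mem_closedBall, dist_eq_norm]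
    have h1 : ‖(∫ x, Φseq n x ∂(μ : Measure X)) - ∫ x, Φ x ∂(μ : Measure X)‖ ≤ ε n := by
      refine int_close _ _ (hΦseqc _) hΦ μ _ fun x => ?_
      rw [norm_sub_rev]; exact happrox _ x
    have h2 : ‖(∫ x, Φ x ∂(μ : Measure X)) - w‖ ≤ ε (n+1) := by
      rw [← hμint]
      exact int_close _ _ hΦ (hΦseqc _) μ _ (happrox _)
    rw [Metric.mem_closedBall, dist_eq_norm] at hwb
    have htri : ‖(∫ x, Φseq n x ∂(μ : Measure X)) - w₀‖ ≤
        ‖(∫ x, Φseq n x ∂(μ : Measure X)) - ∫ x, Φ x ∂(μ : Measure X)‖ +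
        ‖(∫ x, Φ x ∂(μ : Measure X)) - w‖ + ‖w - w₀‖ := by
      have := norm_sub_le_norm_sub_add_norm_sub (∫ x, Φseq n x ∂(μ : Measure X))
        (∫ x, Φ x ∂(μ : Measure X)) w₀
      have := norm_sub_le_norm_sub_add_norm_sub (∫ x, Φ x ∂(μ : Measure X)) w w₀
      linarith
    have hr : ε (n+1) * (α+1) < (α-1) * ε n := by
      have h3 := hεrate n
      rw [div_mul_eq_mul_div, lt_div_iff₀ (by linarith : (0:ℝ) < α+1)] at h3
      linarith
    nlinarith [hεpos n, hεpos (n+1)]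
  have step1 : h μ ≤ locEnt f h (Φseq n) (∫ x, Φseq n x ∂(μ : Measure X)) :=
    le_csSup (hlocbdd _ _) ⟨μ, ⟨hμinv, rfl⟩, rfl⟩
  exact step1.trans (le_csSup (hbddn n) ⟨_, key, rfl⟩)
end

section
/- Let f : X → X be continuous on a compact metric space with μ ↦ h_μ(f) upper semi-continuous, Φ ∈ C(X, ℝ^m), w₀ ∈ int Rot(Φ), α ≥ 1, and let (Φ_{ε_n})_n be an approximating sequence of Φ (‖Φ − Φ_{ε_n}‖_∞ < ε_n, ε_n → 0). Then lim_{n→∞} h^l_{Φ_{ε_n}}(w₀, α·ε_n) = H_Φ(w₀) = lim_{n→∞} h^u_{Φ_{ε_n}}(w₀, α·ε_n). -/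
open MeasureTheory

variable {X : Type*} [MetricSpace X] [CompactSpace X] [MeasurableSpace X] [BorelSpace X]

section AuxLemmas

open Metric
open scoped ENNReal NNReal RealInnerProductSpace

/-- Separation lemma: if a closed convex set `C` comes within `η` of every point of the closed
ball of radius `R`, then `C` contains the closed ball of radius `R - η`. -/
lemma pm_sepLemma {m : ℕ} {C : Set (EuclideanSpace ℝ (Fin m))} (hCc : IsClosed C)
    (hCv : Convex ℝ C) (w₀ : EuclideanSpace ℝ (Fin m)) (R η : ℝ) (hη : 0 ≤ η)
    (hcov : ∀ y ∈ closedBall w₀ R, ∃ p ∈ C, dist p y ≤ η) :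
    closedBall w₀ (R - η) ⊆ C := by
  intro x hx
  by_contra hxC
  have hxd : dist x w₀ ≤ R - η := mem_closedBall.1 hx
  have hR : 0 ≤ R - η := le_trans dist_nonneg hxd
  obtain ⟨g, u, hgu, hux⟩ := geometric_hahn_banach_closed_point hCv hCc hxC
  set a := (InnerProductSpace.toDual ℝ (EuclideanSpace ℝ (Fin m))).symm g with ha
  have hga : ∀ y, g y = ⟪a, y⟫ := by
    intro y
    rw [ha]
    exact InnerProductSpace.toDual_symm_apply.symm
  by_cases haz : a = 0
  · obtain ⟨p, hpC, -⟩ := hcov w₀ (mem_closedBall_self (by linarith))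
    have h1 : g p < u := hgu p hpC
    have h2 : g p = 0 := by rw [hga p, haz, inner_zero_left]
    have h3 : g x = 0 := by rw [hga x, haz, inner_zero_left]
    linarith
  · have hna : 0 < ‖a‖ := norm_pos_iff.2 haz
    set y' := w₀ + (R / ‖a‖) • a with hy'
    have hy'mem : y' ∈ closedBall w₀ R := by
      rw [mem_closedBall, dist_eq_norm, hy']
      simp only [add_sub_cancel_left]
      rw [norm_smul, Real.norm_eq_abs,
        abs_of_nonneg (div_nonneg (by linarith) hna.le),
        div_mul_cancel₀ _ (ne_of_gt hna)]
    obtain ⟨p, hpC, hpd⟩ := hcov y' hy'mem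
    have h1 : g p < u := hgu p hpC
    have h2 : g x ≤ ⟪a, w₀⟫ + (R - η) * ‖a‖ := by
      rw [hga x]
      have he : ⟪a, x⟫ - ⟪a, w₀⟫ = ⟪a, x - w₀⟫ := (inner_sub_right _ _ _).symm
      have h3 : ⟪a, x - w₀⟫ ≤ ‖a‖ * ‖x - w₀‖ := real_inner_le_norm _ _
      have h4 : ‖x - w₀‖ ≤ R - η := by rwa [← dist_eq_norm]
      nlinarith
    have h5 : ⟪a, y'⟫ = ⟪a, w₀⟫ + R * ‖a‖ := by
      rw [hy', inner_add_right, real_inner_smul_right, real_inner_self_eq_norm_sq]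
      field_simp
    have h6 : ⟪a, w₀⟫ + R * ‖a‖ - η * ‖a‖ ≤ g p := by
      rw [hga p]
      have he : ⟪a, y'⟫ - ⟪a, p⟫ = ⟪a, y' - p⟫ := (inner_sub_right _ _ _).symm
      have h3 : ⟪a, y' - p⟫ ≤ ‖a‖ * ‖y' - p‖ := real_inner_le_norm _ _
      have h4 : ‖y' - p‖ ≤ η := by rw [← dist_eq_norm]; rw [dist_comm] at hpd; exact hpd
      nlinarith
    nlinarith

/-- A continuous function on a compact space is integrable w.r.t. any finite measure. -/
lemma pm_contIntegrable {E : Type*} [NormedAddCommGroup E] [NormedSpace ℝ E]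
    (Ψ : X → E) (hΨ : Continuous Ψ) (μ : Measure X) [IsFiniteMeasure μ] :
    Integrable Ψ μ :=
  hΨ.integrable_of_hasCompactSupport (isClosed_tsupport _).isCompact

/-- Convex combination of two invariant probability measures. -/
lemma pm_combo2 (f : X → X) (hf : Continuous f) (t : ℝ) (h0 : 0 ≤ t) (h1 : t ≤ 1)
    (μ ν : ProbabilityMeasure X) (hμ : InvariantProb f μ) (hν : InvariantProb f ν) :
    ∃ ρ : ProbabilityMeasure X,
      (ρ : Measure X) = ENNReal.ofReal t • (μ : Measure X)
        + ENNReal.ofReal (1 - t) • (ν : Measure X) ∧ InvariantProb f ρ := by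
  have hprob : IsProbabilityMeasure
      (ENNReal.ofReal t • (μ : Measure X) + ENNReal.ofReal (1 - t) • (ν : Measure X)) := by
    constructor
    simp only [Measure.add_apply, Measure.smul_apply, smul_eq_mul, measure_univ, mul_one]
    rw [← ENNReal.ofReal_add h0 (by linarith), show t + (1 - t) = 1 by ring, ENNReal.ofReal_one]
  refine ⟨⟨_, hprob⟩, rfl, ?_⟩
  show Measure.map f _ = _
  rw [ProbabilityMeasure.coe_mk,
    Measure.map_add _ _ hf.measurable, Measure.map_smul, Measure.map_smul, hμ, hν]

/-- Integral of a continuous function against a convex combination of probability measures. -/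
lemma pm_integral_combo {E : Type*} [NormedAddCommGroup E] [NormedSpace ℝ E]
    (Ψ : X → E) (hΨ : Continuous Ψ) (t : ℝ) (h0 : 0 ≤ t) (h1 : t ≤ 1)
    (μ ν ρ : ProbabilityMeasure X)
    (hρ : (ρ : Measure X) = ENNReal.ofReal t • (μ : Measure X)
        + ENNReal.ofReal (1 - t) • (ν : Measure X)) :
    ∫ x, Ψ x ∂(ρ : Measure X)
      = t • ∫ x, Ψ x ∂(μ : Measure X) + (1 - t) • ∫ x, Ψ x ∂(ν : Measure X) := by
  rw [hρ, integral_add_measure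
      ((pm_contIntegrable Ψ hΨ (μ : Measure X)).smul_measure ENNReal.ofReal_ne_top)
      ((pm_contIntegrable Ψ hΨ (ν : Measure X)).smul_measure ENNReal.ofReal_ne_top),
    integral_smul_measure, integral_smul_measure,
    ENNReal.toReal_ofReal h0, ENNReal.toReal_ofReal (by linarith)]

/-- If two potentials are uniformly `e`-close, their rotation vectors w.r.t. any probability
measure are `e`-close. -/
lemma pm_integral_diff_bound {k : ℕ} (Φ Ψ : X → EuclideanSpace ℝ (Fin k))
    (hΦ : Continuous Φ) (hΨ : Continuous Ψ) (e : ℝ)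
    (hpt : ∀ x, ‖Φ x - Ψ x‖ ≤ e) (μ : ProbabilityMeasure X) :
    ‖∫ x, Φ x ∂(μ : Measure X) - ∫ x, Ψ x ∂(μ : Measure X)‖ ≤ e := by
  rw [← integral_sub (pm_contIntegrable Φ hΦ _) (pm_contIntegrable Ψ hΨ _)]
  calc ‖∫ x, (Φ x - Ψ x) ∂(μ : Measure X)‖
      ≤ ∫ x, ‖Φ x - Ψ x‖ ∂(μ : Measure X) := norm_integral_le_integral_norm _
    _ ≤ ∫ _x, e ∂(μ : Measure X) := by
        apply integral_mono
          ((pm_contIntegrable Φ hΦ (μ : Measure X)).sub (pm_contIntegrable Ψ hΨ _)).norm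
          (integrable_const e) hpt
    _ = e := by simp

end AuxLemmas

set_option maxHeartbeats 3000000 in
/-- Theorem (interior points): if the entropy map is upper semi-continuous and affine,
`w₀ ∈ int Rot(Φ)` and `α ≥ 1`, then for any approximating sequence `(Φ_{ε_n})` of `Φ`,
`lim h^l_{Φ_{ε_n}}(w₀, α ε_n) = H_Φ(w₀) = lim h^u_{Φ_{ε_n}}(w₀, α ε_n)`. -/
theorem stmt9 (m : ℕ) (f : X → X) (hf : Continuous f)
    (h : ProbabilityMeasure X → ℝ)
    (husc : UpperSemicontinuousOn h {μ | InvariantProb f μ})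
    (hbdd : BddAbove (Set.range h))
    (haff : ∀ (μ ν ρ : ProbabilityMeasure X) (t : ℝ), 0 ≤ t → t ≤ 1 →
      (ρ : Measure X) = (ENNReal.ofReal t) • (μ : Measure X)
          + (ENNReal.ofReal (1 - t)) • (ν : Measure X) →
      h ρ = t * h μ + (1 - t) * h ν)
    (Φ : X → EuclideanSpace ℝ (Fin m)) (hΦ : Continuous Φ)
    (ε : ℕ → ℝ) (hεpos : ∀ n, 0 < ε n) (hεto : Filter.Tendsto ε Filter.atTop (nhds 0))
    (Φseq : ℕ → X → EuclideanSpace ℝ (Fin m)) (hΦseqc : ∀ n, Continuous (Φseq n))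
    (happrox : ∀ n x, ‖Φ x - Φseq n x‖ < ε n)
    (w₀ : EuclideanSpace ℝ (Fin m)) (hw₀ : w₀ ∈ interior (Rot f Φ))
    (α : ℝ) (hα : 1 ≤ α) :
    Filter.Tendsto (fun n => hl f h (Φseq n) w₀ (α * ε n)) Filter.atTop
      (nhds (locEnt f h Φ w₀)) ∧
    Filter.Tendsto (fun n => hu f h (Φseq n) w₀ (α * ε n)) Filter.atTop
      (nhds (locEnt f h Φ w₀)) := by
  classical
  open Metric in
  obtain ⟨C0, hC0u⟩ := hbdd
  have hC0 : ∀ μ, h μ ≤ C0 := fun μ => hC0u (Set.mem_range_self μ)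
  -- generic facts about `locEnt`
  have hbddset : ∀ {k : ℕ} (Ψ : X → EuclideanSpace ℝ (Fin k)) (w : EuclideanSpace ℝ (Fin k)),
      BddAbove (h '' {μ | InvariantProb f μ ∧ (∫ x, Ψ x ∂(μ : Measure X)) = w}) := by
    intro k Ψ w
    refine ⟨C0, ?_⟩
    rintro y ⟨μ, -, rfl⟩
    exact hC0 μ
  have hle : ∀ {k : ℕ} (Ψ : X → EuclideanSpace ℝ (Fin k)) (w : EuclideanSpace ℝ (Fin k))
      (μ : ProbabilityMeasure X), InvariantProb f μ →
      (∫ x, Ψ x ∂(μ : Measure X)) = w → h μ ≤ locEnt f h Ψ w :=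
    fun Ψ w μ h1 h2 => le_csSup (hbddset Ψ w) ⟨μ, ⟨h1, h2⟩, rfl⟩
  have hub : ∀ {k : ℕ} (Ψ : X → EuclideanSpace ℝ (Fin k)) (w : EuclideanSpace ℝ (Fin k)),
      w ∈ Rot f Ψ → locEnt f h Ψ w ≤ C0 := by
    rintro k Ψ w ⟨μ, hμi, hμw⟩
    have hne : (h '' {μ | InvariantProb f μ ∧ (∫ x, Ψ x ∂(μ : Measure X)) = w}).Nonempty :=
      ⟨h μ, Set.mem_image_of_mem h ⟨hμi, hμw⟩⟩
    refine csSup_le hne ?_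
    rintro y ⟨ν, -, rfl⟩
    exact hC0 ν
  have hex : ∀ {k : ℕ} (Ψ : X → EuclideanSpace ℝ (Fin k)) (w : EuclideanSpace ℝ (Fin k)),
      w ∈ Rot f Ψ → ∀ δ : ℝ, 0 < δ →
      ∃ μ, InvariantProb f μ ∧ (∫ x, Ψ x ∂(μ : Measure X)) = w ∧
        locEnt f h Ψ w - δ < h μ := by
    rintro k Ψ w ⟨μ₀, hμ₀⟩ δ hδ
    have hne : (h '' {μ | InvariantProb f μ ∧ (∫ x, Ψ x ∂(μ : Measure X)) = w}).Nonempty :=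
      ⟨h μ₀, Set.mem_image_of_mem h hμ₀⟩
    obtain ⟨y, ⟨μ, hμ, rfl⟩, hy⟩ := exists_lt_of_lt_csSup hne
      (sub_lt_self (locEnt f h Ψ w) hδ)
    exact ⟨μ, hμ.1, hμ.2, hy⟩
  -- concavity of localized entropy
  have hconc : ∀ (u z : EuclideanSpace ℝ (Fin m)) (t : ℝ), 0 ≤ t → t ≤ 1 →
      u ∈ Rot f Φ → z ∈ Rot f Φ →
      t * locEnt f h Φ u + (1 - t) * locEnt f h Φ z ≤
        locEnt f h Φ (t • u + (1 - t) • z) := by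
    intro u z t ht0 ht1 hu hz
    refine le_of_forall_pos_le_add ?_
    intro δ hδ
    obtain ⟨μ, hμi, hμw, hμh⟩ := hex Φ u hu (δ / 2) (by linarith)
    obtain ⟨ν, hνi, hνw, hνh⟩ := hex Φ z hz (δ / 2) (by linarith)
    obtain ⟨ρ, hρeq, hρi⟩ := pm_combo2 f hf t ht0 ht1 μ ν hμi hνi
    have hρint : (∫ x, Φ x ∂(ρ : Measure X)) = t • u + (1 - t) • z := by
      rw [pm_integral_combo Φ hΦ t ht0 ht1 μ ν ρ hρeq, hμw, hνw]
    have hρh : h ρ = t * h μ + (1 - t) * h ν := haff μ ν ρ t ht0 ht1 hρeq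
    have hρle := hle Φ _ ρ hρi hρint
    have m1 : t * (locEnt f h Φ u - δ / 2) ≤ t * h μ :=
      mul_le_mul_of_nonneg_left hμh.le ht0
    have m2 : (1 - t) * (locEnt f h Φ z - δ / 2) ≤ (1 - t) * h ν :=
      mul_le_mul_of_nonneg_left hνh.le (by linarith)
    nlinarith [m1, m2, hρle, hρh]
  -- radius of a ball inside the rotation set
  obtain ⟨R2, hR2pos, hball⟩ : ∃ R2 : ℝ, 0 < R2 ∧ Metric.closedBall w₀ R2 ⊆ Rot f Φ := by
    obtain ⟨r, hr, hsub⟩ := Metric.isOpen_iff.1 isOpen_interior w₀ hw₀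
    refine ⟨r / 2, by linarith, fun y hy => interior_subset (hsub ?_)⟩
    have : dist y w₀ ≤ r / 2 := Metric.mem_closedBall.1 hy
    exact Metric.mem_ball.2 (by linarith)
  have hw₀R : w₀ ∈ Rot f Φ := hball (Metric.mem_closedBall_self hR2pos.le)
  set H₀ := locEnt f h Φ w₀ with hH₀
  -- the finite net and its measures
  obtain ⟨Q, hQsub, hQfin, hQcov⟩ :=
    (isCompact_closedBall w₀ R2).finite_cover_balls (show 0 < R2 / 8 by linarith)
  obtain ⟨μI, hμIi, hμIw⟩ := id hw₀R
  have hQchoice : ∀ q : EuclideanSpace ℝ (Fin m), ∃ σq : ProbabilityMeasure X,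
      q ∈ Q → (InvariantProb f σq ∧ (∫ x, Φ x ∂(σq : Measure X)) = q) := by
    intro q
    by_cases hq : q ∈ Q
    · obtain ⟨μ, h1, h2⟩ := hball (hQsub hq)
      exact ⟨μ, fun _ => ⟨h1, h2⟩⟩
    · exact ⟨μI, fun hc => absurd hc hq⟩
  choose σfun hσQ using hQchoice
  have hQne : Q.Nonempty := by
    obtain ⟨q, hq, -⟩ := Set.mem_iUnion₂.1 (hQcov (Metric.mem_closedBall_self hR2pos.le))
    exact ⟨q, hq⟩
  have hQfinne : hQfin.toFinset.Nonempty := by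
    obtain ⟨q, hq⟩ := hQne
    exact ⟨q, hQfin.mem_toFinset.2 hq⟩
  set L : ℝ := hQfin.toFinset.inf' hQfinne (fun q => h (σfun q)) with hLdef
  have hσL : ∀ q ∈ Q, L ≤ h (σfun q) := fun q hq =>
    Finset.inf'_le _ (hQfin.mem_toFinset.2 hq)
  -- convexity of the set of achievable high-entropy rotation vectors
  have hMgen : ∀ (Ξ : X → EuclideanSpace ℝ (Fin m)), Continuous Ξ →
      Convex ℝ {u | ∃ τ : ProbabilityMeasure X,
        InvariantProb f τ ∧ (∫ x, Ξ x ∂(τ : Measure X)) = u ∧ L ≤ h τ} := by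
    intro Ξ hΞ
    rintro u1 ⟨τ1, hτ1i, hτ1w, hτ1h⟩ u2 ⟨τ2, hτ2i, hτ2w, hτ2h⟩ a b ha hb hab
    obtain ⟨ρ, hρeq, hρi⟩ := pm_combo2 f hf a ha (by linarith) τ1 τ2 hτ1i hτ2i
    have hb' : b = 1 - a := by linarith
    refine ⟨ρ, hρi, ?_, ?_⟩
    · rw [pm_integral_combo Ξ hΞ a ha (by linarith) τ1 τ2 ρ hρeq, hτ1w, hτ2w, hb']
    · have hρh := haff τ1 τ2 ρ a ha (by linarith) hρeq
      have m1 : a * L ≤ a * h τ1 := mul_le_mul_of_nonneg_left hτ1h ha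
      have m2 : (1 - a) * L ≤ (1 - a) * h τ2 :=
        mul_le_mul_of_nonneg_left hτ2h (by linarith)
      rw [hρh]
      linarith
  -- the convex hull of the net covers an inner ball
  have hQhull : Metric.closedBall w₀ (R2 - R2 / 8) ⊆ convexHull ℝ Q := by
    apply pm_sepLemma (hQfin.isClosed_convexHull (𝕜 := ℝ)) (convex_convexHull ℝ Q) w₀ R2 (R2 / 8)
      (by linarith)
    intro y hy
    obtain ⟨q, hq, hyq⟩ := Set.mem_iUnion₂.1 (hQcov hy)
    refine ⟨q, subset_convexHull ℝ Q hq, ?_⟩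
    rw [dist_comm]
    exact (Metric.mem_ball.1 hyq).le
  -- lower bound for localized entropy on the inner ball
  have hMΦ : Metric.closedBall w₀ (R2 - R2 / 8) ⊆ {u | ∃ τ : ProbabilityMeasure X,
      InvariantProb f τ ∧ (∫ x, Φ x ∂(τ : Measure X)) = u ∧ L ≤ h τ} := by
    refine hQhull.trans (convexHull_min ?_ (hMgen Φ hΦ))
    intro q hq
    exact ⟨σfun q, (hσQ q hq).1, (hσQ q hq).2, hσL q hq⟩
  have hLlow : ∀ u ∈ Metric.closedBall w₀ (R2 - R2 / 8), L ≤ locEnt f h Φ u := by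
    intro u hu
    obtain ⟨τ, hτi, hτw, hτh⟩ := hMΦ hu
    exact le_trans hτh (hle Φ u τ hτi hτw)
  have hR78 : (0:ℝ) ≤ R2 - R2 / 8 := by linarith
  have hLH₀ : L ≤ H₀ := hLlow w₀ (Metric.mem_closedBall_self hR78)
  -- upper semicontinuity of the localized entropy at `w₀`
  have husc' : ∀ δ : ℝ, 0 < δ → ∃ r : ℝ, 0 < r ∧ ∀ u, u ∈ Metric.closedBall w₀ r →
      u ∈ Rot f Φ → locEnt f h Φ u ≤ H₀ + δ := by
    intro δ hδ
    set s : ℝ := min (1 / 2) (δ / (2 * (H₀ - L) + 1)) with hs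
    have hden : 0 < 2 * (H₀ - L) + 1 := by linarith
    have hspos : 0 < s := lt_min (by norm_num) (div_pos hδ hden)
    have hs2 : s ≤ 1 / 2 := min_le_left _ _
    have hsd : s * (2 * (H₀ - L) + 1) ≤ δ := by
      have h1 := min_le_right (1 / 2 : ℝ) (δ / (2 * (H₀ - L) + 1))
      calc s * (2 * (H₀ - L) + 1) ≤ (δ / (2 * (H₀ - L) + 1)) * (2 * (H₀ - L) + 1) :=
            mul_le_mul_of_nonneg_right h1 hden.le
        _ = δ := div_mul_cancel₀ _ (ne_of_gt hden)
    refine ⟨(R2 - R2 / 8) * s, mul_pos (by linarith) hspos, ?_⟩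
    intro u hu huR
    set t : ℝ := 1 - s with htdef
    have ht0 : 0 ≤ t := by rw [htdef]; linarith
    have ht1 : t ≤ 1 := by rw [htdef]; linarith
    have hst : 1 - t = s := by rw [htdef]; ring
    set z := (s : ℝ)⁻¹ • (w₀ - t • u) with hz
    have hcomb : t • u + (1 - t) • z = w₀ := by
      rw [hst, hz, smul_smul, mul_inv_cancel₀ (ne_of_gt hspos), one_smul]
      abel
    have hzball : z ∈ Metric.closedBall w₀ (R2 - R2 / 8) := by
      rw [Metric.mem_closedBall, dist_eq_norm]
      have hzw : z - w₀ = (t / s) • (w₀ - u) := by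
        rw [hz, htdef]
        match_scalars <;> field_simp
      rw [hzw, norm_smul, Real.norm_eq_abs, abs_of_nonneg (div_nonneg ht0 hspos.le)]
      have hn : ‖w₀ - u‖ ≤ (R2 - R2 / 8) * s := by
        rw [norm_sub_rev, ← dist_eq_norm]
        exact Metric.mem_closedBall.1 hu
      calc t / s * ‖w₀ - u‖ ≤ t / s * ((R2 - R2 / 8) * s) :=
            mul_le_mul_of_nonneg_left hn (div_nonneg ht0 hspos.le)
        _ = t * (R2 - R2 / 8) := by field_simp
        _ ≤ R2 - R2 / 8 := by nlinarith
    have hzrot : z ∈ Rot f Φ :=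
      hball (Metric.closedBall_subset_closedBall (by linarith) hzball)
    have hcv := hconc u z t ht0 ht1 huR hzrot
    rw [hcomb, ← hH₀] at hcv
    have hLz : L ≤ locEnt f h Φ z := hLlow z hzball
    rw [hst] at hcv
    by_contra hcon
    push_neg at hcon
    have hmul := mul_lt_mul_of_pos_left hcon (show 0 < t by rw [htdef]; linarith)
    have hsz : s * L ≤ s * locEnt f h Φ z := mul_le_mul_of_nonneg_left hLz hspos.le
    have hsδ : s * δ ≤ δ / 2 := by nlinarith
    rw [htdef] at hmul hcv
    nlinarith [hmul, hcv, hsz, hsδ, hsd, hspos]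
  -- the key quantitative estimate
  have key : ∀ δ : ℝ, 0 < δ → ∃ N : ℕ, ∀ n ≥ N,
      |hl f h (Φseq n) w₀ (α * ε n) - H₀| ≤ δ ∧ |hu f h (Φseq n) w₀ (α * ε n) - H₀| ≤ δ := by
    intro δ hδ
    obtain ⟨r, hrpos, huscr⟩ := husc' δ hδ
    obtain ⟨ν, hνi, hνw, hνh⟩ := hex Φ w₀ hw₀R (δ / 2) (by linarith)
    set K : ℝ := max ((H₀ - δ / 2) - L) 0 with hKdef
    have hKnn : 0 ≤ K := le_max_right _ _
    have hαpos : 0 < α + 1 := by linarith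
    set e1 : ℝ := (3 * R2 / 8) / (α + 1) with he1def
    set e2 : ℝ := (δ / 2) * R2 / (2 * (α + 1) * (K + 1)) with he2def
    set e3 : ℝ := r / (α + 1) with he3def
    have he1 : 0 < e1 := div_pos (by linarith) hαpos
    have he2 : 0 < e2 := div_pos (mul_pos (by linarith) hR2pos) (by positivity)
    have he3 : 0 < e3 := div_pos hrpos hαpos
    have hev : ∀ᶠ n in Filter.atTop, ε n < min e1 (min e2 e3) :=
      hεto.eventually (gt_mem_nhds (lt_min he1 (lt_min he2 he3)))
    obtain ⟨N, hN⟩ := Filter.eventually_atTop.1 hev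
    refine ⟨N, fun n hn => ?_⟩
    have hεn := hεpos n
    have hemin := hN n hn
    set e := ε n with hedef
    have heE1 : e < e1 := lt_of_lt_of_le hemin (min_le_left _ _)
    have heE2 : e < e2 := lt_of_lt_of_le hemin ((min_le_right _ _).trans (min_le_left _ _))
    have heE3 : e < e3 := lt_of_lt_of_le hemin ((min_le_right _ _).trans (min_le_right _ _))
    have heq1 : (α + 1) * e ≤ 3 * R2 / 8 := by
      have := mul_lt_mul_of_pos_left heE1 hαpos
      rw [he1def, mul_div_cancel₀ _ (ne_of_gt hαpos)] at this
      linarith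
    have heq2 : 2 * (α + 1) * (K + 1) * e ≤ (δ / 2) * R2 := by
      have hden : (0 : ℝ) < 2 * (α + 1) * (K + 1) := by positivity
      have := mul_lt_mul_of_pos_left heE2 hden
      rw [he2def, mul_div_cancel₀ _ (ne_of_gt hden)] at this
      linarith
    have heq3 : (α + 1) * e ≤ r := by
      have := mul_lt_mul_of_pos_left heE3 hαpos
      rw [he3def, mul_div_cancel₀ _ (ne_of_gt hαpos)] at this
      linarith
    set Ψ := Φseq n with hΨdef
    have hΨc : Continuous Ψ := hΦseqc n
    have happ : ∀ x, ‖Φ x - Ψ x‖ ≤ e := fun x => (happrox n x).le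
    -- the perturbed net
    set P : EuclideanSpace ℝ (Fin m) → EuclideanSpace ℝ (Fin m) :=
      fun q => ∫ x, Ψ x ∂(σfun q : Measure X) with hPdef
    have hPq : ∀ q ∈ Q, dist (P q) q ≤ e := by
      intro q hq
      have h1 := pm_integral_diff_bound Φ Ψ hΦ hΨc e happ (σfun q)
      rw [(hσQ q hq).2] at h1
      rw [dist_eq_norm, ← norm_sub_rev]
      exact h1
    -- the set of achievable high-entropy rotation vectors
    set M : Set (EuclideanSpace ℝ (Fin m)) := {u | ∃ τ : ProbabilityMeasure X,
      InvariantProb f τ ∧ (∫ x, Ψ x ∂(τ : Measure X)) = u ∧ L ≤ h τ} with hMdef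
    have hMconv : Convex ℝ M := hMgen Ψ hΨc
    have hPhullM : convexHull ℝ (P '' Q) ⊆ M := by
      refine convexHull_min ?_ hMconv
      rintro p ⟨q, hq, rfl⟩
      exact ⟨σfun q, (hσQ q hq).1, rfl, hσL q hq⟩
    have hcov2 : ∀ y ∈ Metric.closedBall w₀ (R2 - R2 / 8),
        ∃ p ∈ convexHull ℝ (P '' Q), dist p y ≤ e := by
      have hSconv : Convex ℝ {y | ∃ p ∈ convexHull ℝ (P '' Q), dist p y ≤ e} := by
        rintro y1 ⟨p1, hp1, hd1⟩ y2 ⟨p2, hp2, hd2⟩ a b ha hb hab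
        refine ⟨a • p1 + b • p2, (convex_convexHull ℝ _) hp1 hp2 ha hb hab, ?_⟩
        have hd1' : ‖p1 - y1‖ ≤ e := by rw [← dist_eq_norm]; exact hd1
        have hd2' : ‖p2 - y2‖ ≤ e := by rw [← dist_eq_norm]; exact hd2
        calc dist (a • p1 + b • p2) (a • y1 + b • y2)
            = ‖(a • (p1 - y1)) + (b • (p2 - y2))‖ := by rw [dist_eq_norm]; congr 1; module
          _ ≤ ‖a • (p1 - y1)‖ + ‖b • (p2 - y2)‖ := norm_add_le _ _
          _ = a * ‖p1 - y1‖ + b * ‖p2 - y2‖ := by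
              rw [norm_smul, norm_smul, Real.norm_eq_abs, Real.norm_eq_abs,
                abs_of_nonneg ha, abs_of_nonneg hb]
          _ ≤ a * e + b * e := add_le_add (mul_le_mul_of_nonneg_left hd1' ha)
              (mul_le_mul_of_nonneg_left hd2' hb)
          _ = e := by rw [← add_mul, hab, one_mul]
      have hQS : Q ⊆ {y | ∃ p ∈ convexHull ℝ (P '' Q), dist p y ≤ e} := by
        intro q hq
        exact ⟨P q, subset_convexHull ℝ _ ⟨q, hq, rfl⟩, hPq q hq⟩
      intro y hy
      exact convexHull_min hQS hSconv (hQhull hy)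
    have hMball : Metric.closedBall w₀ (R2 - R2 / 8 - e) ⊆ M :=
      (pm_sepLemma ((hQfin.image P).isClosed_convexHull (𝕜 := ℝ)) (convex_convexHull ℝ _)
        w₀ (R2 - R2 / 8) e hεn.le hcov2).trans hPhullM
    -- the sets in question
    set Sn := Metric.closedBall w₀ (α * e) ∩ Rot f Ψ with hSndef
    set An := locEnt f h Ψ '' Sn with hAndef
    have hhl : hl f h Ψ w₀ (α * e) = sInf An := rfl
    have hhu : hu f h Ψ w₀ (α * e) = sSup An := rfl
    -- nonemptiness
    obtain ⟨μ₀, hμ₀i, hμ₀w⟩ := id hw₀R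
    have hv₀ : (∫ x, Ψ x ∂(μ₀ : Measure X)) ∈ Sn := by
      constructor
      · rw [Metric.mem_closedBall, dist_eq_norm]
        have h1 := pm_integral_diff_bound Φ Ψ hΦ hΨc e happ μ₀
        rw [hμ₀w] at h1
        rw [← norm_sub_rev]
        have hae : 1 * e ≤ α * e := mul_le_mul_of_nonneg_right hα hεn.le
        linarith
      · exact ⟨μ₀, hμ₀i, rfl⟩
    have hAnne : An.Nonempty := ⟨_, Set.mem_image_of_mem _ hv₀⟩
    -- upper bound for all elements of An
    have hupper : ∀ x ∈ An, x ≤ H₀ + δ := by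
      rintro x ⟨w, ⟨hwball, hwrot⟩, rfl⟩
      obtain ⟨μw, hμwi, hμww⟩ := hwrot
      have hne : (h '' {μ | InvariantProb f μ ∧ (∫ x, Ψ x ∂(μ : Measure X)) = w}).Nonempty :=
        ⟨h μw, Set.mem_image_of_mem h ⟨hμwi, hμww⟩⟩
      refine csSup_le hne ?_
      rintro y ⟨μ, ⟨hμi, hμw⟩, rfl⟩
      have hu'rot : (∫ x, Φ x ∂(μ : Measure X)) ∈ Rot f Φ := ⟨μ, hμi, rfl⟩
      have hu'ball : (∫ x, Φ x ∂(μ : Measure X)) ∈ Metric.closedBall w₀ r := by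
        rw [Metric.mem_closedBall]
        have h1 := pm_integral_diff_bound Φ Ψ hΦ hΨc e happ μ
        rw [hμw] at h1
        have h2 : dist (∫ x, Φ x ∂(μ : Measure X)) w ≤ e := by rw [dist_eq_norm]; exact h1
        have h3 : dist w w₀ ≤ α * e := Metric.mem_closedBall.1 hwball
        calc dist (∫ x, Φ x ∂(μ : Measure X)) w₀
            ≤ dist (∫ x, Φ x ∂(μ : Measure X)) w + dist w w₀ := dist_triangle _ _ _
          _ ≤ e + α * e := add_le_add h2 h3
          _ ≤ r := by linarith
      calc h μ ≤ locEnt f h Φ (∫ x, Φ x ∂(μ : Measure X)) := hle Φ _ μ hμi rfl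
        _ ≤ H₀ + δ := huscr _ hu'ball hu'rot
    -- lower bound for all elements of An
    have hlower : ∀ x ∈ An, H₀ - δ ≤ x := by
      rintro x ⟨w, ⟨hwball, hwrot⟩, rfl⟩
      set v := ∫ x, Ψ x ∂(ν : Measure X) with hvdef
      have hvw₀ : ‖v - w₀‖ ≤ e := by
        have h1 := pm_integral_diff_bound Φ Ψ hΦ hΨc e happ ν
        rw [hνw] at h1
        rw [← norm_sub_rev]
        exact h1
      have hww₀ : ‖w - w₀‖ ≤ α * e := by
        rw [← dist_eq_norm]
        exact Metric.mem_closedBall.1 hwball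
      have hwv : ‖w - v‖ ≤ (α + 1) * e := by
        calc ‖w - v‖ = ‖(w - w₀) + (w₀ - v)‖ := by congr 1; abel
          _ ≤ ‖w - w₀‖ + ‖w₀ - v‖ := norm_add_le _ _
          _ ≤ α * e + e := add_le_add hww₀ (by rw [norm_sub_rev]; exact hvw₀)
          _ = (α + 1) * e := by ring
      have hνh' : H₀ - δ / 2 ≤ h ν := hνh.le
      by_cases hwveq : w = v
      · have h1 := hle Ψ w ν hνi (by rw [hwveq])
        linarith
      · set d := ‖w - v‖ with hddef
        have hdpos : 0 < d := norm_pos_iff.2 (sub_ne_zero.2 hwveq)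
        set c : ℝ := (R2 / 2) / d with hcdef
        have hcpos : 0 < c := div_pos (by linarith) hdpos
        have h1c : 0 < 1 + c := by linarith
        set t : ℝ := c / (1 + c) with htdef
        have ht0 : 0 ≤ t := (div_pos hcpos h1c).le
        have ht1 : t ≤ 1 := by rw [htdef, div_le_one h1c]; linarith
        have h1t : 1 - t = 1 / (1 + c) := by rw [htdef]; field_simp; ring
        set u := w + c • (w - v) with hudef
        have huball : u ∈ Metric.closedBall w₀ (R2 - R2 / 8 - e) := by
          rw [Metric.mem_closedBall, dist_eq_norm]
          have hcd : c * d = R2 / 2 := by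
            rw [hcdef]; exact div_mul_cancel₀ _ (ne_of_gt hdpos)
          calc ‖u - w₀‖ = ‖(w - w₀) + c • (w - v)‖ := by rw [hudef]; congr 1; abel
            _ ≤ ‖w - w₀‖ + ‖c • (w - v)‖ := norm_add_le _ _
            _ = ‖w - w₀‖ + c * d := by
                rw [norm_smul, Real.norm_eq_abs, abs_of_nonneg hcpos.le, hddef]
            _ ≤ α * e + R2 / 2 := by rw [hcd]; exact add_le_add_left hww₀ _
            _ ≤ R2 - R2 / 8 - e := by linarith
        obtain ⟨τ, hτi, hτw, hτh⟩ := hMball huball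
        obtain ⟨ρ, hρeq, hρi⟩ := pm_combo2 f hf t ht0 ht1 ν τ hνi hτi
        have hρint : (∫ x, Ψ x ∂(ρ : Measure X)) = w := by
          rw [pm_integral_combo Ψ hΨc t ht0 ht1 ν τ ρ hρeq, hτw, ← hvdef, hudef]
          have hct : (1 - t) * c = t := by rw [h1t, htdef]; field_simp
          rw [smul_add, smul_smul, hct]
          module
        have hρh := haff ν τ ρ t ht0 ht1 hρeq
        have h1tble : 1 - t ≤ 2 * (α + 1) * e / R2 := by
          rw [h1t]
          have ha1 : 1 / (1 + c) ≤ 1 / c := one_div_le_one_div_of_le hcpos (by linarith)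
          have ha2 : 1 / c = 2 * d / R2 := by rw [hcdef]; field_simp
          have ha3 : 2 * d / R2 ≤ 2 * ((α + 1) * e) / R2 := by gcongr
          calc 1 / (1 + c) ≤ 2 * d / R2 := by rw [← ha2]; exact ha1
            _ ≤ 2 * ((α + 1) * e) / R2 := ha3
            _ = 2 * (α + 1) * e / R2 := by ring_nf
        have hKb : (H₀ - δ / 2) - L ≤ K := le_max_left _ _
        have hfin : H₀ - δ ≤ h ρ := by
          have ht' : 0 ≤ 1 - t := by linarith
          have m1 : t * (H₀ - δ / 2) ≤ t * h ν := mul_le_mul_of_nonneg_left hνh' ht0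
          have m2 : (1 - t) * L ≤ (1 - t) * h τ := mul_le_mul_of_nonneg_left hτh ht'
          have m3 : (1 - t) * ((H₀ - δ / 2) - L) ≤ (1 - t) * (K + 1) :=
            mul_le_mul_of_nonneg_left (by linarith) ht'
          have m4 : (1 - t) * (K + 1) ≤ (2 * (α + 1) * e / R2) * (K + 1) :=
            mul_le_mul_of_nonneg_right h1tble (by linarith)
          have m5 : (2 * (α + 1) * e / R2) * (K + 1) ≤ δ / 2 := by
            rw [div_mul_eq_mul_div, div_le_iff₀ hR2pos]
            calc 2 * (α + 1) * e * (K + 1) = 2 * (α + 1) * (K + 1) * e := by ring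
              _ ≤ (δ / 2) * R2 := heq2
              _ = δ / 2 * R2 := by ring
          linarith [m1, m2, m3, m4, m5, hρh]
        have h1 := hle Ψ w ρ hρi hρint
        linarith
    -- conclusion of the quantitative step
    have hbddA : BddAbove An := ⟨H₀ + δ, fun x hx => hupper x hx⟩
    have hbddB : BddBelow An := ⟨H₀ - δ, fun x hx => hlower x hx⟩
    have hAnne2 := hAnne
    obtain ⟨x₀, hx₀⟩ := hAnne2
    constructor
    · rw [hhl, abs_le]
      constructor
      · have h1 := le_csInf hAnne fun x hx => hlower x hx
        linarith
      · have h1 : sInf An ≤ x₀ := csInf_le hbddB hx₀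
        have h2 := hupper x₀ hx₀
        linarith
    · rw [hhu, abs_le]
      constructor
      · have h1 : x₀ ≤ sSup An := le_csSup hbddA hx₀
        have h2 := hlower x₀ hx₀
        linarith
      · have h1 := csSup_le hAnne fun x hx => hupper x hx
        linarith
  -- conclusion
  constructor
  · rw [Metric.tendsto_atTop]
    intro δ hδ
    obtain ⟨N, hN⟩ := key (δ / 2) (by linarith)
    refine ⟨N, fun n hn => ?_⟩
    have h1 := (hN n hn).1
    rw [Real.dist_eq]
    calc |hl f h (Φseq n) w₀ (α * ε n) - H₀| ≤ δ / 2 := h1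
      _ < δ := by linarith
  · rw [Metric.tendsto_atTop]
    intro δ hδ
    obtain ⟨N, hN⟩ := key (δ / 2) (by linarith)
    refine ⟨N, fun n hn => ?_⟩
    have h1 := (hN n hn).2
    rw [Real.dist_eq]
    calc |hu f h (Φseq n) w₀ (α * ε n) - H₀| ≤ δ / 2 := h1
      _ < δ := by linarith
end

section
/- Let f : X → X be continuous on a compact metric space with μ ↦ h_μ(f) upper semi-continuous. Then the global entropy function (Φ, w) ↦ H_Φ(w) is continuous on the set ⋃_{Φ ∈ C(X,ℝ^m)} {Φ} × int Rot(Φ), where C(X,ℝ^m) × ℝ^m carries the metric given by the sum of the supremum norm distance and the Euclidean distance. -/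
open MeasureTheory

variable {X : Type*} [MetricSpace X] [CompactSpace X] [MeasurableSpace X] [BorelSpace X]

/-- Every point of a small ball is in a closed convex set whose support function
nearly dominates that of a set containing a bigger ball. -/
lemma pert_mem {m : ℕ} {C : Set (EuclideanSpace ℝ (Fin m))} (hCc : Convex ℝ C)
    (hCcl : IsClosed C) (hCne : C.Nonempty) {w₀ u : EuclideanSpace ℝ (Fin m)} {r δ : ℝ}
    (hδ : δ ≤ r)
    (hsupp : ∀ y : EuclideanSpace ℝ (Fin m), ‖y‖ = 1 → ∀ z, dist z w₀ ≤ 2 * r →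
      ∃ c ∈ C, (inner ℝ y z : ℝ) ≤ (inner ℝ y c : ℝ) + δ)
    (hu : dist u w₀ ≤ r) : u ∈ C := by
  obtain ⟨p, hpC, hp⟩ := exists_norm_eq_iInf_of_complete_convex hCne hCcl.isComplete hCc u
  have hproj : ∀ w ∈ C, (inner ℝ (u - p) (w - p) : ℝ) ≤ 0 :=
    (norm_eq_iInf_iff_real_inner_le_zero hCc hpC).mp hp
  by_contra hu'
  have hup : u ≠ p := fun hh => hu' (hh ▸ hpC)
  have hnorm : 0 < ‖u - p‖ := by
    rw [norm_pos_iff, sub_ne_zero]; exact hup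
  set y : EuclideanSpace ℝ (Fin m) := ‖u - p‖⁻¹ • (u - p) with hy
  have hy1 : ‖y‖ = 1 := by
    rw [hy, norm_smul, norm_inv, norm_norm, inv_mul_cancel₀ hnorm.ne']
  set z : EuclideanSpace ℝ (Fin m) := u + r • y with hz
  have hr0 : (0:ℝ) ≤ r := le_trans (by positivity) (le_trans dist_nonneg hu)
  have hzw : dist z w₀ ≤ 2 * r := by
    calc dist z w₀ ≤ dist z u + dist u w₀ := dist_triangle _ _ _
    _ ≤ r + r := by
        refine add_le_add ?_ hu
        rw [hz, dist_eq_norm, add_sub_cancel_left, norm_smul, hy1, mul_one,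
          Real.norm_eq_abs, abs_of_nonneg hr0]
    _ = 2 * r := by ring
  obtain ⟨c, hcC, hyc⟩ := hsupp y hy1 z hzw
  have h1 : (inner ℝ y z : ℝ) = inner ℝ y u + r := by
    rw [hz, inner_add_right, real_inner_smul_right, real_inner_self_eq_norm_sq, hy1]
    ring
  have h2 : (inner ℝ y c : ℝ) ≤ inner ℝ y p := by
    have : (inner ℝ y (c - p) : ℝ) ≤ 0 := by
      rw [hy, real_inner_smul_left]
      exact mul_nonpos_of_nonneg_of_nonpos (by positivity) (hproj c hcC)
    have := this
    rw [inner_sub_right] at this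
    linarith
  have h3 : (inner ℝ y (u - p) : ℝ) = ‖u - p‖ := by
    rw [hy, real_inner_smul_left, real_inner_self_eq_norm_sq]
    field_simp
  rw [inner_sub_right] at h3
  have : (inner ℝ y u : ℝ) + r ≤ inner ℝ y p + δ := by
    rw [← h1]; exact le_trans hyc (by linarith)
  have : ‖u - p‖ ≤ δ - r := by linarith
  linarith

/-- coordinates are bounded by the norm. -/
lemma coord_le_norm {m : ℕ} (d : EuclideanSpace ℝ (Fin m)) (i : Fin m) : |d i| ≤ ‖d‖ := by
  rw [EuclideanSpace.norm_eq, ← Real.sqrt_sq_eq_abs]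
  apply Real.sqrt_le_sqrt
  calc d i ^ 2 = ‖d i‖ ^ 2 := by rw [Real.norm_eq_abs, sq_abs]
  _ ≤ ∑ j, ‖d j‖ ^ 2 := Finset.single_le_sum (f := fun j => ‖d j‖ ^ 2) (fun j _ => by positivity) (Finset.mem_univ i)

lemma sum_coord_smul_single {m : ℕ} (d : EuclideanSpace ℝ (Fin m)) :
    ∑ i : Fin m, d i • EuclideanSpace.single i (1:ℝ) = d := by
  have := (EuclideanSpace.basisFun (Fin m) ℝ).sum_repr d
  simpa [EuclideanSpace.basisFun_repr, EuclideanSpace.basisFun_apply] using this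

/-- Cross-polytope representation: each point of the ball of radius `a/m` around `w₀`
is a convex combination of the `2m` points `w₀ ± a • eᵢ`. -/
lemma crosspoly {m : ℕ} (hm : 0 < m) {a : ℝ} (ha : 0 < a)
    (w₀ z : EuclideanSpace ℝ (Fin m)) (hz : dist z w₀ ≤ a / m) :
    ∃ lam : Fin m × Bool → ℝ, (∀ i, 0 ≤ lam i) ∧ (∑ i, lam i = 1) ∧
      (∑ i : Fin m × Bool, lam i •
        (w₀ + (if i.2 then a else -a) • EuclideanSpace.single i.1 (1:ℝ)) = z) := by
  set d : EuclideanSpace ℝ (Fin m) := z - w₀ with hd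
  have hdi : ∀ i, |d i| ≤ a / m := fun i =>
    le_trans (coord_le_norm d i) (by rwa [hd, ← dist_eq_norm])
  have hm' : (0:ℝ) < m := by exact_mod_cast hm
  refine ⟨fun p => 1 / (2 * m) + (if p.2 then 1 else -1) * d p.1 / (2 * a), ?_, ?_, ?_⟩
  · rintro ⟨i, s⟩
    have h1 : |d i| / (2 * a) ≤ 1 / (2 * m) := by
      rw [div_le_div_iff₀ (by positivity) (by positivity)]
      calc |d i| * (2 * m) ≤ (a / m) * (2 * m) := by
            apply mul_le_mul_of_nonneg_right (hdi i) (by positivity)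
      _ = 1 * (2 * a) := by field_simp
    have h2 : |(if s then (1:ℝ) else -1) * d i / (2 * a)| = |d i| / (2 * a) := by
      rw [abs_div, abs_mul, abs_of_pos (by positivity : (0:ℝ) < 2 * a)]
      cases s <;> simp
    have := neg_abs_le ((if s then (1:ℝ) else -1) * d i / (2 * a))
    simp only [h2] at this
    linarith
  · rw [Fintype.sum_prod_type]
    have : ∀ i : Fin m, ∑ s : Bool,
        (1 / (2 * m) + (if s then (1:ℝ) else -1) * d i / (2 * a)) = 1 / m := by
      intro i
      rw [Fintype.sum_bool]
      simp only [if_true, if_false, Bool.false_eq_true, ↓reduceIte]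
      field_simp
      ring
    rw [Finset.sum_congr rfl (fun i _ => this i)]
    simp
    field_simp
  · have key : ∀ i : Fin m, ∑ s : Bool,
        ((1 / (2 * m) + (if s then (1:ℝ) else -1) * d i / (2 * a)) •
          (w₀ + (if s then a else -a) • EuclideanSpace.single i (1:ℝ)))
        = (1 / (m:ℝ)) • w₀ + d i • EuclideanSpace.single i (1:ℝ) := by
      intro i
      rw [Fintype.sum_bool]
      simp only [if_true, if_false, Bool.false_eq_true, ↓reduceIte]
      match_scalars
      · field_simp; ring
      · field_simp; ring
    rw [Fintype.sum_prod_type, Finset.sum_congr rfl (fun i _ => key i),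
      Finset.sum_add_distrib, ← Finset.sum_smul, sum_coord_smul_single]
    have : ∑ _i : Fin m, (1:ℝ) / m = 1 := by
      rw [Finset.sum_const]
      simp
      field_simp
    rw [this, one_smul, hd]
    abel

lemma cont_int {E' : Type*} [NormedAddCommGroup E'] [NormedSpace ℝ E'] {g : X → E'}
    (hg : Continuous g) (μ : Measure X) [IsFiniteMeasure μ] : Integrable g μ :=
  hg.integrable_of_hasCompactSupport (HasCompactSupport.of_compactSpace g)

lemma rv_dist {m : ℕ} (Φ Ψ : C(X, EuclideanSpace ℝ (Fin m))) (μ : Measure X)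
    [IsProbabilityMeasure μ] :
    ‖(∫ x, Φ x ∂μ) - ∫ x, Ψ x ∂μ‖ ≤ dist Φ Ψ := by
  rw [← integral_sub (cont_int Φ.continuous μ) (cont_int Ψ.continuous μ)]
  calc ‖∫ x, (Φ x - Ψ x) ∂μ‖ ≤ dist Φ Ψ * (μ Set.univ).toReal :=
        norm_integral_le_of_norm_le_const (Filter.Eventually.of_forall fun x => by
          rw [← dist_eq_norm]; exact ContinuousMap.dist_apply_le_dist x)
  _ = dist Φ Ψ := by simp

lemma mix_exists {f : X → X} (hf : Continuous f) {t : ℝ} (ht0 : 0 ≤ t) (ht1 : t ≤ 1)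
    (μ ν : ProbabilityMeasure X) (hμ : InvariantProb f μ) (hν : InvariantProb f ν) :
    ∃ ρ : ProbabilityMeasure X, InvariantProb f ρ ∧
      (ρ : Measure X) = ENNReal.ofReal t • (μ : Measure X)
        + ENNReal.ofReal (1 - t) • (ν : Measure X) := by
  set κ : Measure X := ENNReal.ofReal t • (μ : Measure X)
      + ENNReal.ofReal (1 - t) • (ν : Measure X) with hκ
  have hprob : IsProbabilityMeasure κ := by
    constructor
    rw [hκ, Measure.add_apply, Measure.smul_apply, Measure.smul_apply, measure_univ,
      measure_univ, smul_eq_mul, smul_eq_mul, mul_one, mul_one,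
      ← ENNReal.ofReal_add ht0 (by linarith), add_sub_cancel, ENNReal.ofReal_one]
  refine ⟨⟨κ, hprob⟩, ?_, rfl⟩
  show κ.map f = κ
  rw [hκ, Measure.map_add _ _ hf.measurable, Measure.map_smul, Measure.map_smul, hμ, hν]

lemma integral_mix {E' : Type*} [NormedAddCommGroup E'] [NormedSpace ℝ E'] {g : X → E'}
    (hg : Continuous g) {t : ℝ} (ht0 : 0 ≤ t) (ht1 : t ≤ 1) {μ ν : ProbabilityMeasure X}
    {ρ : ProbabilityMeasure X}
    (hρ : (ρ : Measure X) = ENNReal.ofReal t • (μ : Measure X)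
        + ENNReal.ofReal (1 - t) • (ν : Measure X)) :
    ∫ x, g x ∂(ρ : Measure X)
      = t • ∫ x, g x ∂(μ : Measure X) + (1 - t) • ∫ x, g x ∂(ν : Measure X) := by
  rw [hρ, integral_add_measure ((cont_int hg _).smul_measure ENNReal.ofReal_ne_top)
      ((cont_int hg _).smul_measure ENNReal.ofReal_ne_top),
    integral_smul_measure, integral_smul_measure, ENNReal.toReal_ofReal ht0,
    ENNReal.toReal_ofReal (by linarith)]

lemma nary_mix {m : ℕ} {f : X → X} (hf : Continuous f) (h : ProbabilityMeasure X → ℝ)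
    (haff : ∀ (μ ν ρ : ProbabilityMeasure X) (t : ℝ), 0 ≤ t → t ≤ 1 →
      (ρ : Measure X) = (ENNReal.ofReal t) • (μ : Measure X)
          + (ENNReal.ofReal (1 - t)) • (ν : Measure X) →
      h ρ = t * h μ + (1 - t) * h ν)
    {ι : Type} (s : Finset ι) (hs : s.Nonempty) (ρ : ι → ProbabilityMeasure X)
    (lam : ι → ℝ) (h0 : ∀ i ∈ s, 0 ≤ lam i) (h1 : ∑ i ∈ s, lam i = 1)
    (hρ : ∀ i ∈ s, InvariantProb f (ρ i)) :
    ∃ ν : ProbabilityMeasure X, InvariantProb f ν ∧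
      (∀ g : X → EuclideanSpace ℝ (Fin m), Continuous g →
        ∫ x, g x ∂(ν : Measure X) = ∑ i ∈ s, lam i • ∫ x, g x ∂(ρ i : Measure X)) ∧
      h ν = ∑ i ∈ s, lam i * h (ρ i) := by
  induction s using Finset.cons_induction generalizing lam with
  | empty => exact absurd hs (by simp)
  | cons a s ha IH =>
    rcases s.eq_empty_or_nonempty with rfl | hsne
    · have hla : lam a = 1 := by simpa using h1
      refine ⟨ρ a, hρ a (by simp), fun g hg => ?_, ?_⟩ <;> simp [hla]
    · rw [Finset.sum_cons] at h1
      set c : ℝ := ∑ i ∈ s, lam i with hc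
      have hc0 : 0 ≤ c := Finset.sum_nonneg fun i hi => h0 i (Finset.mem_cons_of_mem hi)
      have hla0 : 0 ≤ lam a := h0 a (Finset.mem_cons_self _ _)
      rcases eq_or_lt_of_le hc0 with hceq | hcpos
      · have hzero : ∀ i ∈ s, lam i = 0 :=
          (Finset.sum_eq_zero_iff_of_nonneg
            (fun i hi => h0 i (Finset.mem_cons_of_mem hi))).mp hceq.symm
        have hla : lam a = 1 := by rw [← hceq] at h1; linarith
        refine ⟨ρ a, hρ a (Finset.mem_cons_self _ _), fun g hg => ?_, ?_⟩
        · rw [Finset.sum_cons, hla, one_smul,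
            Finset.sum_congr rfl (fun i hi => by rw [hzero i hi, zero_smul]),
            Finset.sum_const_zero, add_zero]
        · rw [Finset.sum_cons, hla, one_mul,
            Finset.sum_congr rfl (fun i hi => by rw [hzero i hi, zero_mul]),
            Finset.sum_const_zero, add_zero]
      · obtain ⟨ν', hν'inv, hν'int, hν'h⟩ := IH hsne (fun i => lam i / c)
          (fun i hi => div_nonneg (h0 i (Finset.mem_cons_of_mem hi)) hc0)
          (by rw [← Finset.sum_div, ← hc, div_self hcpos.ne'])
          (fun i hi => hρ i (Finset.mem_cons_of_mem hi))
        have ht1 : lam a ≤ 1 := by linarith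
        have h1t : 1 - lam a = c := by linarith
        obtain ⟨ν, hνinv, hνeq⟩ := mix_exists hf hla0 ht1 (ρ a) ν'
          (hρ a (Finset.mem_cons_self _ _)) hν'inv
        refine ⟨ν, hνinv, fun g hg => ?_, ?_⟩
        · rw [integral_mix hg hla0 ht1 hνeq, hν'int g hg, Finset.sum_cons, h1t,
            Finset.smul_sum]
          congr 1
          refine Finset.sum_congr rfl fun i hi => ?_
          rw [smul_smul, mul_div_cancel₀ _ hcpos.ne']
        · rw [haff (ρ a) ν' ν (lam a) hla0 ht1 hνeq, hν'h, Finset.sum_cons, h1t,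
            Finset.mul_sum]
          congr 1
          refine Finset.sum_congr rfl fun i hi => ?_
          rw [← mul_assoc, mul_div_cancel₀ _ hcpos.ne']

/-- Realization lemma: near an interior point, every nearby rotation vector is realized
by an invariant measure built from `2m` fixed measures, so its entropy is uniformly
bounded below. -/
lemma realize {m : ℕ} (hm : 0 < m) {f : X → X} (hf : Continuous f)
    (h : ProbabilityMeasure X → ℝ)
    (haff : ∀ (μ ν ρ : ProbabilityMeasure X) (t : ℝ), 0 ≤ t → t ≤ 1 →
      (ρ : Measure X) = (ENNReal.ofReal t) • (μ : Measure X)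
          + (ENNReal.ofReal (1 - t)) • (ν : Measure X) →
      h ρ = t * h μ + (1 - t) * h ν)
    {a : ℝ} (ha : 0 < a) (w₀ : EuclideanSpace ℝ (Fin m))
    (ρ : Fin m × Bool → ProbabilityMeasure X)
    (hρinv : ∀ i, InvariantProb f (ρ i))
    (Φ₀ : C(X, EuclideanSpace ℝ (Fin m)))
    (hρrv : ∀ i, (∫ x, Φ₀ x ∂(ρ i : Measure X))
      = w₀ + (if i.2 then a else -a) • EuclideanSpace.single i.1 (1:ℝ))
    (Φ : C(X, EuclideanSpace ℝ (Fin m))) (hΦ : dist Φ Φ₀ ≤ a / m / 2)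
    (u : EuclideanSpace ℝ (Fin m)) (hu : dist u w₀ ≤ a / m / 2) :
    ∃ ν : ProbabilityMeasure X, InvariantProb f ν ∧
      (∫ x, Φ x ∂(ν : Measure X)) = u ∧
      ∃ lam : Fin m × Bool → ℝ, (∀ j, 0 ≤ lam j) ∧ (∑ j, lam j = 1) ∧
        h ν = ∑ j, lam j * h (ρ j) := by
  haveI : Nonempty (Fin m) := ⟨⟨0, hm⟩⟩
  set v : Fin m × Bool → EuclideanSpace ℝ (Fin m) := fun i =>
    w₀ + (if i.2 then a else -a) • EuclideanSpace.single i.1 (1:ℝ) with hv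
  set v' : Fin m × Bool → EuclideanSpace ℝ (Fin m) := fun i => ∫ x, Φ x ∂(ρ i : Measure X) with hv'
  have hvv' : ∀ i, ‖v i - v' i‖ ≤ a / m / 2 := by
    intro i
    simp only [hv, hv']
    rw [← hρrv i]
    calc ‖(∫ x, Φ₀ x ∂(ρ i : Measure X)) - ∫ x, Φ x ∂(ρ i : Measure X)‖ ≤ dist Φ₀ Φ :=
      rv_dist Φ₀ Φ _
    _ ≤ a / m / 2 := by rwa [dist_comm]
  set F : ((Fin m × Bool) → ℝ) → EuclideanSpace ℝ (Fin m) := fun lam => ∑ i, lam i • v' i with hF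
  have hFe : ∀ i₀ : Fin m × Bool, F (fun j => if j = i₀ then 1 else 0) = v' i₀ := by
    intro i₀
    rw [hF]
    simp only [ite_smul, one_smul, zero_smul]
    rw [Finset.sum_ite_eq' Finset.univ i₀ v']
    simp
  have hesimplex : ∀ i₀ : Fin m × Bool, (fun j => if j = i₀ then (1:ℝ) else 0) ∈ stdSimplex ℝ (Fin m × Bool) := by
    intro i₀
    constructor
    · intro j; dsimp only; split <;> norm_num
    · rw [Finset.sum_ite_eq' Finset.univ i₀ (fun _ => (1:ℝ))]; simp
  set C : Set (EuclideanSpace ℝ (Fin m)) := F '' stdSimplex ℝ (Fin m × Bool) with hC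
  have hCcvx : Convex ℝ C := by
    rintro x ⟨lx, hlx, rfl⟩ y ⟨ly, hly, rfl⟩ p q hp hq hpq
    refine ⟨p • lx + q • ly, convex_stdSimplex ℝ (Fin m × Bool) hlx hly hp hq hpq, ?_⟩
    rw [hF]
    simp only [Pi.add_apply, Pi.smul_apply, smul_eq_mul, add_smul, mul_smul]
    rw [Finset.sum_add_distrib, ← Finset.smul_sum, ← Finset.smul_sum]
  have hCcl : IsClosed C :=
    ((isCompact_stdSimplex ℝ (Fin m × Bool)).image
      (continuous_finset_sum _ fun i _ => (continuous_apply i).smul continuous_const)).isClosed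
  have hCne : C.Nonempty := ⟨_, _, hesimplex (Classical.arbitrary (Fin m × Bool)), rfl⟩
  have hsupp : ∀ y : EuclideanSpace ℝ (Fin m), ‖y‖ = 1 → ∀ z, dist z w₀ ≤ 2 * (a / m / 2) →
      ∃ c ∈ C, (inner ℝ y z : ℝ) ≤ (inner ℝ y c : ℝ) + a / m / 2 := by
    intro y hy z hz
    have hz' : dist z w₀ ≤ a / m := by linarith
    obtain ⟨lam, hl0, hl1, hlz⟩ := crosspoly hm ha w₀ z hz'
    obtain ⟨i₀, -, hi₀⟩ := Finset.exists_max_image Finset.univ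
      (fun i => (inner ℝ y (v i) : ℝ)) Finset.univ_nonempty
    refine ⟨v' i₀, ⟨_, hesimplex i₀, hFe i₀⟩, ?_⟩
    have h1 : (inner ℝ y z : ℝ) ≤ inner ℝ y (v i₀) := by
      rw [← hlz, inner_sum]
      calc (∑ i, (inner ℝ y (lam i • v i) : ℝ)) = ∑ i, lam i * inner ℝ y (v i) :=
            Finset.sum_congr rfl fun i _ => real_inner_smul_right y (v i) (lam i)
      _ ≤ ∑ i, lam i * inner ℝ y (v i₀) := Finset.sum_le_sum fun i _ =>
            mul_le_mul_of_nonneg_left (hi₀ i (Finset.mem_univ i)) (hl0 i)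
      _ = inner ℝ y (v i₀) := by rw [← Finset.sum_mul, hl1, one_mul]
    have h2 : (inner ℝ y (v i₀) : ℝ) ≤ inner ℝ y (v' i₀) + a / m / 2 := by
      have : (inner ℝ y (v i₀ - v' i₀) : ℝ) ≤ a / m / 2 := by
        calc (inner ℝ y (v i₀ - v' i₀) : ℝ) ≤ ‖y‖ * ‖v i₀ - v' i₀‖ := real_inner_le_norm _ _
        _ ≤ 1 * (a / m / 2) := by
            rw [hy]; exact mul_le_mul_of_nonneg_left (hvv' i₀) zero_le_one
        _ = a / m / 2 := one_mul _
      rw [inner_sub_right] at this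
      linarith
    linarith
  have huC : u ∈ C := pert_mem hCcvx hCcl hCne (le_refl (a / m / 2)) hsupp hu
  obtain ⟨lam, hlmem, hlF⟩ := huC
  obtain ⟨ν, hνinv, hνint, hνh⟩ := nary_mix (m := m) hf h haff Finset.univ
    Finset.univ_nonempty ρ lam (fun i _ => hlmem.1 i) hlmem.2 (fun i _ => hρinv i)
  refine ⟨ν, hνinv, ?_, ⟨lam, hlmem.1, hlmem.2, hνh⟩⟩
  rw [hνint (⇑Φ) Φ.continuous]
  exact hlF

set_option maxHeartbeats 1000000 in
/-- Theorem B: if the entropy map `μ ↦ h_μ(f)` is upper semi-continuous (and affine, with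
finite topological entropy), then the global entropy function `(Φ, w) ↦ H_Φ(w)` is
continuous on `⋃_Φ {Φ} × int Rot(Φ) ⊆ C(X, ℝ^m) × ℝ^m`. -/
theorem stmt10 (m : ℕ) (f : X → X) (hf : Continuous f)
    (h : ProbabilityMeasure X → ℝ)
    (husc : UpperSemicontinuousOn h {μ | InvariantProb f μ})
    (hbdd : BddAbove (Set.range h))
    (haff : ∀ (μ ν ρ : ProbabilityMeasure X) (t : ℝ), 0 ≤ t → t ≤ 1 →
      (ρ : Measure X) = (ENNReal.ofReal t) • (μ : Measure X)
          + (ENNReal.ofReal (1 - t)) • (ν : Measure X) →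
      h ρ = t * h μ + (1 - t) * h ν) :
    ContinuousOn
      (fun p : C(X, EuclideanSpace ℝ (Fin m)) × EuclideanSpace ℝ (Fin m) =>
        locEnt f h (⇑p.1) p.2)
      {p : C(X, EuclideanSpace ℝ (Fin m)) × EuclideanSpace ℝ (Fin m) |
        p.2 ∈ interior (Rot f (⇑p.1))} := by
  rcases Nat.eq_zero_or_pos m with hm0 | hm
  · subst hm0
    haveI : Subsingleton (EuclideanSpace ℝ (Fin 0)) := ⟨fun a b => PiLp.ext fun i => i.elim0⟩
    have hfun : (fun p : C(X, EuclideanSpace ℝ (Fin 0)) × EuclideanSpace ℝ (Fin 0) =>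
        locEnt f h (⇑p.1) p.2) = fun _ => sSup (h '' {μ | InvariantProb f μ}) := by
      funext p
      unfold locEnt
      have hset : {μ : ProbabilityMeasure X | InvariantProb f μ ∧
          (∫ x, p.1 x ∂(μ : Measure X)) = p.2} = {μ | InvariantProb f μ} :=
        Set.ext fun μ => and_iff_left (Subsingleton.elim _ _)
      rw [hset]
    rw [hfun]
    exact continuousOn_const
  · intro p₀ hp₀
    rw [Metric.continuousWithinAt_iff]
    intro ε hε
    simp only [Set.mem_setOf_eq] at hp₀
    haveI : Nonempty (Fin m) := ⟨⟨0, hm⟩⟩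
    obtain ⟨r, hrpos, hrsub⟩ := Metric.mem_nhds_iff.mp (mem_interior_iff_mem_nhds.mp hp₀)
    set a : ℝ := r / 2 with hadef
    have ha : 0 < a := by positivity
    clear_value a
    set R : ℝ := a / m / 2 with hRdef
    have hR : 0 < R := by
      have : (0:ℝ) < m := by exact_mod_cast hm
      positivity
    clear_value R
    obtain ⟨μ₀, hμ₀inv, hμ₀rv⟩ := interior_subset hp₀
    have hpts : ∀ i : Fin m × Bool,
        (p₀.2 + (if i.2 then a else -a) • EuclideanSpace.single i.1 (1:ℝ)) ∈ Rot f ⇑p₀.1 := by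
      intro i
      apply hrsub
      rw [Metric.mem_ball, dist_self_add_left, norm_smul, EuclideanSpace.norm_single]
      have : ‖if i.2 then a else -a‖ = a := by
        cases i.2 <;> simp [Real.norm_eq_abs, abs_of_pos ha]
      rw [this]
      simp only [norm_one, mul_one]
      rw [hadef]; linarith
    choose ρ hρinv hρrv using hpts
    set C₀ : ℝ := Finset.univ.inf' Finset.univ_nonempty (fun i : Fin m × Bool => h (ρ i))
      with hC₀def
    have hC₀le : ∀ lam : Fin m × Bool → ℝ, (∀ j, 0 ≤ lam j) → (∑ j, lam j = 1) →
        C₀ ≤ ∑ j, lam j * h (ρ j) := by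
      intro lam h0 h1
      calc C₀ = ∑ j, lam j * C₀ := by rw [← Finset.sum_mul, h1, one_mul]
      _ ≤ ∑ j, lam j * h (ρ j) := Finset.sum_le_sum fun j _ =>
            mul_le_mul_of_nonneg_left (Finset.inf'_le _ (Finset.mem_univ j)) (h0 j)
    clear_value C₀
    obtain ⟨M, hM⟩ := hbdd
    have hMle : ∀ μ, h μ ≤ M := fun μ => hM ⟨μ, rfl⟩
    have hfib : ∀ (g : X → EuclideanSpace ℝ (Fin m)) (w : EuclideanSpace ℝ (Fin m)),
        BddAbove (h '' {μ | InvariantProb f μ ∧ (∫ x, g x ∂(μ : Measure X)) = w}) :=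
      fun g w => ⟨M, by rintro y ⟨μ, -, rfl⟩; exact hMle μ⟩
    set H₀ : ℝ := locEnt f h (⇑p₀.1) p₀.2 with hH₀def
    clear_value H₀
    have hS₀ne : (h '' {μ | InvariantProb f μ ∧
        (∫ x, p₀.1 x ∂(μ : Measure X)) = p₀.2}).Nonempty := ⟨h μ₀, μ₀, ⟨hμ₀inv, hμ₀rv⟩, rfl⟩
    set G : ℝ := max (H₀ - C₀) 0 with hGdef
    set T : ℝ := max (M - C₀) 0 with hTdef
    clear_value G T
    have hG0 : 0 ≤ G := by rw [hGdef]; exact le_max_right _ _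
    have hT0 : 0 ≤ T := by rw [hTdef]; exact le_max_right _ _
    set s : ℝ := ε / (2 * (G + 1)) with hsdef
    clear_value s
    have hs : 0 < s := by rw [hsdef]; exact div_pos hε (by linarith)
    have hsG : s * G ≤ ε / 2 := by
      rw [hsdef, div_mul_eq_mul_div, div_le_iff₀ (by linarith : (0:ℝ) < 2 * (G + 1))]
      nlinarith [hε.le, hG0]
    set t : ℝ := min 1 (ε / (2 * (T + 1))) with htdef
    clear_value t
    have htpos : 0 < t := by rw [htdef]; exact lt_min one_pos (div_pos hε (by linarith))
    have ht1 : t ≤ 1 := by rw [htdef]; exact min_le_left _ _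
    have htT : t * T ≤ ε / 2 := by
      calc t * T ≤ (ε / (2 * (T + 1))) * T :=
            mul_le_mul_of_nonneg_right (by rw [htdef]; exact min_le_right _ _) hT0
      _ ≤ ε / 2 := by
          rw [div_mul_eq_mul_div, div_le_div_iff₀ (by linarith) (by norm_num)]
          nlinarith [hε.le, hT0]
    set δ : ℝ := min (t * R / 3) (s * R / 2) with hδdef
    clear_value δ
    have hδpos : 0 < δ := by rw [hδdef]; exact lt_min (by positivity) (by positivity)
    refine ⟨δ, hδpos, ?_⟩
    rintro p hpS hpd
    simp only [Set.mem_setOf_eq] at hpS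
    have hdΦ : dist p.1 p₀.1 ≤ δ := by
      refine le_of_lt (lt_of_le_of_lt ?_ hpd)
      rw [Prod.dist_eq]; exact le_max_left _ _
    have hdw : dist p.2 p₀.2 ≤ δ := by
      refine le_of_lt (lt_of_le_of_lt ?_ hpd)
      rw [Prod.dist_eq]; exact le_max_right _ _
    obtain ⟨μw, hμwinv, hμwrv⟩ := interior_subset hpS
    -- Upper bound
    have hupper : locEnt f h (⇑p.1) p.2 ≤ H₀ + ε / 2 := by
      refine csSup_le ⟨h μw, μw, ⟨hμwinv, hμwrv⟩, rfl⟩ ?_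
      rintro y ⟨μ, ⟨hinv, hrv⟩, rfl⟩
      set u : EuclideanSpace ℝ (Fin m) := ∫ x, p₀.1 x ∂(μ : Measure X) with hudef
      have hud : dist u p₀.2 ≤ s * R := by
        have h1 : dist u p.2 ≤ δ := by
          rw [← hrv, dist_eq_norm]
          exact le_trans (rv_dist p₀.1 p.1 (μ : Measure X)) (by rwa [dist_comm])
        calc dist u p₀.2 ≤ dist u p.2 + dist p.2 p₀.2 := dist_triangle _ _ _
        _ ≤ δ + δ := add_le_add h1 hdw
        _ ≤ s * R := by
            have := min_le_right (t * R / 3) (s * R / 2)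
            rw [← hδdef] at this
            linarith
      set u' : EuclideanSpace ℝ (Fin m) := p₀.2 - s⁻¹ • (u - p₀.2) with hu'def
      clear_value u'
      have hu' : dist u' p₀.2 ≤ R := by
        have : u' - p₀.2 = -(s⁻¹ • (u - p₀.2)) := by rw [hu'def]; module
        rw [dist_eq_norm, this, norm_neg, norm_smul, Real.norm_eq_abs,
          abs_of_pos (inv_pos.mpr hs)]
        rw [dist_eq_norm] at hud
        calc s⁻¹ * ‖u - p₀.2‖ ≤ s⁻¹ * (s * R) :=
              mul_le_mul_of_nonneg_left hud (inv_pos.mpr hs).le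
        _ = R := by field_simp
      obtain ⟨ρ', hρ'inv, hρ'rv, lam', hl'0, hl'1, hl'h⟩ :=
        realize hm hf h haff ha p₀.2 ρ hρinv p₀.1 hρrv p₀.1
          (by rw [dist_self]; exact hRdef ▸ hR.le) u' (le_of_le_of_eq hu' hRdef)
      have hρ'C₀ : C₀ ≤ h ρ' := by rw [hl'h]; exact hC₀le lam' hl'0 hl'1
      set tU : ℝ := s / (1 + s) with htUdef
      have h1s : (0:ℝ) < 1 + s := by linarith
      have htU0 : 0 ≤ tU := div_nonneg hs.le h1s.le
      have htU1 : tU ≤ 1 := by rw [htUdef, div_le_one h1s]; linarith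
      obtain ⟨ν, hνinv, hνeq⟩ := mix_exists hf htU0 htU1 ρ' μ hρ'inv hinv
      have hνrv : (∫ x, p₀.1 x ∂(ν : Measure X)) = p₀.2 := by
        rw [integral_mix p₀.1.continuous htU0 htU1 hνeq, hρ'rv, ← hudef, hu'def, htUdef]
        match_scalars <;> field_simp <;> ring
      have hνle : h ν ≤ H₀ := by
        rw [hH₀def]
        exact le_csSup (hfib (⇑p₀.1) p₀.2) ⟨ν, ⟨hνinv, hνrv⟩, rfl⟩
      have hhν : h ν = tU * h ρ' + (1 - tU) * h μ := haff _ _ _ _ htU0 htU1 hνeq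
      have hkey : h ν + s * h ν = s * h ρ' + h μ := by
        have : (1 + s) * h ν = s * h ρ' + h μ := by
          rw [hhν, htUdef]
          field_simp
          try ring
        linarith [this, (by ring : (1 + s) * h ν = h ν + s * h ν)]
      have e1 : s * h ν ≤ s * H₀ := mul_le_mul_of_nonneg_left hνle hs.le
      have e2 : s * C₀ ≤ s * h ρ' := mul_le_mul_of_nonneg_left hρ'C₀ hs.le
      have e3 : s * H₀ - s * C₀ ≤ s * G := by
        have h3 := mul_le_mul_of_nonneg_left (le_max_left (H₀ - C₀) (0:ℝ)) hs.le
        rw [mul_sub, ← hGdef] at h3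
        exact h3
      linarith [hkey, hνle, e1, e2, e3, hsG]
    -- Lower bound
    have hlower : H₀ - 3 * ε / 4 ≤ locEnt f h (⇑p.1) p.2 := by
      have hlt : H₀ - ε / 4 < sSup (h '' {μ | InvariantProb f μ ∧
          (∫ x, p₀.1 x ∂(μ : Measure X)) = p₀.2}) := by
        have h0 : sSup (h '' {μ | InvariantProb f μ ∧
            (∫ x, p₀.1 x ∂(μ : Measure X)) = p₀.2}) = H₀ := by rw [hH₀def]; rfl
        rw [h0]
        linarith
      obtain ⟨y, ⟨μ₁, ⟨hμ₁inv, hμ₁rv⟩, rfl⟩, hμ₁h⟩ := exists_lt_of_lt_csSup hS₀ne hlt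
      set e : EuclideanSpace ℝ (Fin m) := ∫ x, p.1 x ∂(μ₁ : Measure X) with hedef
      have hed : dist e p₀.2 ≤ δ := by
        rw [← hμ₁rv, dist_eq_norm]
        exact le_trans (rv_dist p.1 p₀.1 (μ₁ : Measure X)) hdΦ
      set u : EuclideanSpace ℝ (Fin m) := e + t⁻¹ • (p.2 - e) with hudef
      have hδR : δ ≤ t * R / 3 := by rw [hδdef]; exact min_le_left _ _
      have hu : dist u p₀.2 ≤ R := by
        have h1 : u - p₀.2 = (e - p₀.2) + t⁻¹ • (p.2 - e) := by rw [hudef]; module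
        have h2 : ‖p.2 - e‖ ≤ 2 * δ := by
          calc ‖p.2 - e‖ = dist p.2 e := (dist_eq_norm _ _).symm
          _ ≤ dist p.2 p₀.2 + dist p₀.2 e := dist_triangle _ _ _
          _ ≤ δ + δ := add_le_add hdw (by rwa [dist_comm])
          _ = 2 * δ := by ring
        rw [dist_eq_norm, h1]
        calc ‖(e - p₀.2) + t⁻¹ • (p.2 - e)‖ ≤ ‖e - p₀.2‖ + ‖t⁻¹ • (p.2 - e)‖ :=
              norm_add_le _ _
        _ ≤ δ + t⁻¹ * (2 * δ) := by
            refine add_le_add (by rwa [← dist_eq_norm]) ?_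
            rw [norm_smul, Real.norm_eq_abs, abs_of_pos (inv_pos.mpr htpos)]
            exact mul_le_mul_of_nonneg_left h2 (inv_pos.mpr htpos).le
        _ ≤ R := by
            have hti : t⁻¹ * (2 * δ) ≤ t⁻¹ * (2 * (t * R / 3)) :=
              mul_le_mul_of_nonneg_left (by linarith) (inv_pos.mpr htpos).le
            have : t⁻¹ * (2 * (t * R / 3)) = 2 * R / 3 := by field_simp
            rw [this] at hti
            have : δ ≤ R / 3 := by nlinarith [hδR, ht1, hR.le]
            linarith
      obtain ⟨ρu, hρuinv, hρurv, lam', hl'0, hl'1, hl'h⟩ :=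
        realize hm hf h haff ha p₀.2 ρ hρinv p₀.1 hρrv p.1
          (le_of_le_of_eq (le_trans hdΦ (le_trans hδR (by nlinarith [hR.le, ht1]))) hRdef)
          u (le_of_le_of_eq hu hRdef)
      have hρuC₀ : C₀ ≤ h ρu := by rw [hl'h]; exact hC₀le lam' hl'0 hl'1
      obtain ⟨ν, hνinv, hνeq⟩ := mix_exists hf htpos.le ht1 ρu μ₁ hρuinv hμ₁inv
      have hνrv : (∫ x, p.1 x ∂(ν : Measure X)) = p.2 := by
        rw [integral_mix p.1.continuous htpos.le ht1 hνeq, hρurv, hudef, ← hedef]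
        match_scalars <;> field_simp <;> ring
      have hhν : h ν = t * h ρu + (1 - t) * h μ₁ := haff _ _ _ _ htpos.le ht1 hνeq
      have hhν' : h ν = h μ₁ - t * (h μ₁ - h ρu) := by rw [hhν]; ring
      have e1 : t * (h μ₁ - h ρu) ≤ t * T :=
        mul_le_mul_of_nonneg_left (by
          have := hMle μ₁
          have := le_max_left (M - C₀) 0
          linarith) htpos.le
      have hbnd : H₀ - 3 * ε / 4 ≤ h ν := by linarith
      exact le_trans hbnd (le_csSup (hfib (⇑p.1) p.2) ⟨ν, ⟨hνinv, hνrv⟩, rfl⟩)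
    rw [Real.dist_eq]
    have habs : |locEnt f h (⇑p.1) p.2 - H₀| ≤ 3 * ε / 4 :=
      abs_le.mpr ⟨by linarith, by linarith⟩
    linarith
end

section
/- Let f : X → X be continuous on a compact metric space with finite topological entropy, Φ ∈ C(X, ℝ^m), v ∈ ℝ^m \ {0}, and let μ be an equilibrium state of the potential v·Φ. Let r = dist(rv(μ), ∂Rot(Φ)). Then ‖v‖ ≤ (2/r)·h_top(f). -/
open MeasureTheory

variable {X : Type*} [MetricSpace X] [CompactSpace X] [MeasurableSpace X] [BorelSpace X]

/-- The topological pressure of a one-dimensional potential via the variational principle. -/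
noncomputable def Ptop (f : X → X) (h : ProbabilityMeasure X → ℝ) (ψ : X → ℝ) : ℝ :=
  sSup {c | ∃ μ : ProbabilityMeasure X, InvariantProb f μ ∧
    h μ + (∫ x, ψ x ∂(μ : Measure X)) = c}

lemma preconn_subset_of_disjoint_frontier {E : Type*} [TopologicalSpace E] {s t : Set E}
    (hs : IsPreconnected s) (hdisj : ∀ y ∈ s, y ∉ frontier t)
    {x : E} (hx : x ∈ s) (hxt : x ∈ t) : s ⊆ t := by
  have hsub : s ⊆ interior t ∪ interior tᶜ := by
    intro y hy
    rw [← compl_frontier_eq_union_interior]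
    exact hdisj y hy
  have hdis : Disjoint (interior t) (interior tᶜ) := by
    rw [interior_compl]
    exact disjoint_compl_right.mono_left (interior_subset.trans subset_closure)
  rcases hs.subset_or_subset isOpen_interior isOpen_interior hdis hsub with h1 | h1
  · exact h1.trans interior_subset
  · exact absurd hxt (interior_subset (h1 hx))


/-- Bound for the norm of `v` when `v·Φ` admits an equilibrium state. -/
theorem stmt11 (m : ℕ) (f : X → X) (hf : Continuous f)
    (h : ProbabilityMeasure X → ℝ)
    (hnonneg : ∀ μ : ProbabilityMeasure X, InvariantProb f μ → 0 ≤ h μ)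
    (hbdd : BddAbove (Set.range h))
    (Φ : X → EuclideanSpace ℝ (Fin m)) (hΦ : Continuous Φ)
    (v : EuclideanSpace ℝ (Fin m)) (hv : v ≠ 0)
    (μ : ProbabilityMeasure X) (hμinv : InvariantProb f μ)
    (hequil : h μ + (∫ x, (inner ℝ v (Φ x) : ℝ) ∂(μ : Measure X)) =
      Ptop f h (fun x => (inner ℝ v (Φ x) : ℝ)))
    (r : ℝ) (hr : r = Metric.infDist (∫ x, Φ x ∂(μ : Measure X)) (frontier (Rot f Φ)))
    (hrpos : 0 < r) :
    ‖v‖ ≤ (2 / r) * Ptop f h (fun _ => 0) := by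
  have hne : Nonempty X := (μ : Measure X).nonempty_of_neZero
  have hvpos : (0:ℝ) < ‖v‖ := norm_pos_iff.mpr hv
  set w : EuclideanSpace ℝ (Fin m) := ∫ x, Φ x ∂(μ : Measure X) with hw
  -- integrability of Φ and of v·Φ
  have hΦint : ∀ ν : ProbabilityMeasure X, Integrable Φ (ν : Measure X) := fun ν =>
    hΦ.integrable_of_hasCompactSupport (isClosed_tsupport Φ).isCompact
  -- bound on v·Φ
  have hcont : Continuous fun x => (inner ℝ v (Φ x) : ℝ) :=
    (continuous_const : Continuous fun _ : X => v).inner hΦ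
  obtain ⟨x0, -, hx0⟩ := isCompact_univ.exists_isMaxOn Set.univ_nonempty
    hcont.norm.continuousOn
  set C : ℝ := ‖(inner ℝ v (Φ x0) : ℝ)‖ with hC
  have hCb : ∀ x, ‖(inner ℝ v (Φ x) : ℝ)‖ ≤ C := fun x => hx0 (Set.mem_univ x)
  have hint_le : ∀ ν : ProbabilityMeasure X,
      (∫ x, (inner ℝ v (Φ x) : ℝ) ∂(ν : Measure X)) ≤ C := by
    intro ν
    have := norm_integral_le_of_norm_le_const (μ := (ν : Measure X))
      (f := fun x => (inner ℝ v (Φ x) : ℝ)) (C := C) (Filter.Eventually.of_forall hCb)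
    simp at this
    exact (le_abs_self _).trans this
  obtain ⟨B, hB⟩ := hbdd
  have hBr : ∀ ν : ProbabilityMeasure X, h ν ≤ B := fun ν => hB ⟨ν, rfl⟩
  -- boundedness of pressure sets
  have bddP : BddAbove {c | ∃ ν : ProbabilityMeasure X, InvariantProb f ν ∧
      h ν + (∫ x, (inner ℝ v (Φ x) : ℝ) ∂(ν : Measure X)) = c} := by
    refine ⟨B + C, ?_⟩
    rintro c ⟨ν, -, rfl⟩
    exact add_le_add (hBr ν) (hint_le ν)
  have bdd0 : BddAbove {c | ∃ ν : ProbabilityMeasure X, InvariantProb f ν ∧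
      h ν + (∫ x, (0:ℝ) ∂(ν : Measure X)) = c} := by
    refine ⟨B, ?_⟩
    rintro c ⟨ν, -, rfl⟩
    simpa using hBr ν
  have hμP0 : h μ ≤ Ptop f h (fun _ => 0) :=
    le_csSup bdd0 ⟨μ, hμinv, by simp⟩
  have hP0nonneg : 0 ≤ Ptop f h (fun _ => 0) := (hnonneg μ hμinv).trans hμP0
  have hwRot : w ∈ Rot f Φ := ⟨μ, hμinv, rfl⟩
  -- integral of v·Φ equals inner ℝ v (rotation vector)
  have hinner : ∀ ν : ProbabilityMeasure X,
      (∫ x, (inner ℝ v (Φ x) : ℝ) ∂(ν : Measure X)) =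
        (inner ℝ v (∫ x, Φ x ∂(ν : Measure X)) : ℝ) := fun ν =>
    integral_inner (hΦint ν) v
  -- key estimate
  have key : ∀ s : ℝ, 0 < s → s < r → s * ‖v‖ ≤ h μ := by
    intro s hs hsr
    set u : EuclideanSpace ℝ (Fin m) := w + (s / ‖v‖) • v with hu
    have hdistuw : dist u w = s := by
      rw [dist_eq_norm]
      simp [hu, norm_smul, abs_of_pos (div_pos hs hvpos), div_mul_cancel₀ _ (ne_of_gt hvpos), hs.le]
    have hseg : segment ℝ w u ⊆ Rot f Φ := by
      apply preconn_subset_of_disjoint_frontier (convex_segment w u).isPreconnected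
        ?_ (left_mem_segment ℝ w u) hwRot
      intro y hy hyfr
      have h1 : dist y w ≤ dist u w := by
        have : y ∈ Metric.closedBall w (dist u w) :=
          (convex_closedBall w (dist u w)).segment_subset
            (Metric.mem_closedBall_self dist_nonneg) (Metric.mem_closedBall.mpr le_rfl) hy
        exact Metric.mem_closedBall.mp this
      have h2 : Metric.infDist w (frontier (Rot f Φ)) ≤ dist w y :=
        Metric.infDist_le_dist_of_mem hyfr
      rw [← hr] at h2
      rw [dist_comm] at h2
      linarith [h1.trans_eq hdistuw, h2]
    have huRot : u ∈ Rot f Φ := hseg (right_mem_segment ℝ w u)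
    obtain ⟨ν, hνinv, hνint⟩ := huRot
    have hmem : h ν + (∫ x, (inner ℝ v (Φ x) : ℝ) ∂(ν : Measure X)) ∈
        {c | ∃ ν' : ProbabilityMeasure X, InvariantProb f ν' ∧
          h ν' + (∫ x, (inner ℝ v (Φ x) : ℝ) ∂(ν' : Measure X)) = c} := ⟨ν, hνinv, rfl⟩
    have hle : h ν + (∫ x, (inner ℝ v (Φ x) : ℝ) ∂(ν : Measure X)) ≤
        h μ + (∫ x, (inner ℝ v (Φ x) : ℝ) ∂(μ : Measure X)) := by
      rw [hequil]
      exact le_csSup bddP hmem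
    have e1 : (∫ x, (inner ℝ v (Φ x) : ℝ) ∂(ν : Measure X)) = inner ℝ v w + s * ‖v‖ := by
      rw [hinner ν, hνint, hu, inner_add_right, real_inner_smul_right,
        real_inner_self_eq_norm_sq]
      field_simp
    have e2 : (∫ x, (inner ℝ v (Φ x) : ℝ) ∂(μ : Measure X)) = inner ℝ v w := by
      rw [hinner μ]
    rw [e1, e2] at hle
    have := hnonneg ν hνinv
    linarith
  -- pass to the limit s → r
  have hrv : r * ‖v‖ ≤ h μ := by
    apply le_of_forall_pos_le_add
    intro ε hε
    set δ := min (ε / ‖v‖) (r / 2) with hδ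
    have hδpos : 0 < δ := lt_min (div_pos hε hvpos) (by linarith)
    have hδle : δ ≤ r / 2 := min_le_right _ _
    have h1 := key (r - δ) (by linarith) (by linarith)
    have h2 : δ * ‖v‖ ≤ ε := by
      have h3 : δ ≤ ε / ‖v‖ := min_le_left _ _
      calc δ * ‖v‖ ≤ (ε / ‖v‖) * ‖v‖ := by nlinarith
        _ = ε := div_mul_cancel₀ _ (ne_of_gt hvpos)
    nlinarith
  -- conclude
  rw [div_mul_eq_mul_div, le_div_iff₀ hrpos]
  calc ‖v‖ * r = r * ‖v‖ := mul_comm _ _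
    _ ≤ h μ := hrv
    _ ≤ Ptop f h (fun _ => 0) := hμP0
    _ ≤ 2 * Ptop f h (fun _ => 0) := by linarith
end

section
/- Let f : X → X be a transitive subshift of finite type with transition matrix A, and Φ : X → ℝ constant on cylinders of length 2 with values Φ(i,j) on the cylinder C(i,j). Set B_{ij} = e^{Φ(i,j)} A_{ij} with Perron–Frobenius eigenvalue λ, and let μ = μ_{(p,P)} be the associated Markov measure (P_{ij} = B_{ij} r_j / (λ r_i), p_i = r_i l_i with (r,l)=1). Then h_μ(f) + ∫Φ dμ = log λ; in particular h_μ(f) = log λ − ∑_{i,j} p_i P_{ij} Φ(i,j). -/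
open Matrix

/-- Entropy/pressure identity for the Markov measure of a 2-locally-constant potential on a
transitive SFT with transition matrix `A`: with `B_{ij} = e^{Φ(i,j)} A_{ij}`,
Perron–Frobenius data `λ, r, l` (normalized so `(r,l)=1`), `P_{ij} = B_{ij} r_j/(λ r_i)` and
`p_i = r_i l_i`, the associated Markov measure `μ` satisfies
`h_μ(f) + ∫Φ dμ = log λ`, i.e.
`−∑ p_i P_{ij} log P_{ij} + ∑ p_i P_{ij} Φ(i,j) = log λ`. -/
theorem stmt18 (d : ℕ) (A : Fin d → Fin d → Bool)
    (hirr : ∀ i j : Fin d, ∃ n : ℕ,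
      0 < ((Matrix.of fun i j : Fin d => if A i j then (1 : ℝ) else 0) ^ n) i j)
    (Φ : Fin d → Fin d → ℝ) (B : Matrix (Fin d) (Fin d) ℝ)
    (hB : ∀ i j, B i j = if A i j then Real.exp (Φ i j) else 0)
    (lam : ℝ) (hlam : 0 < lam) (r l : Fin d → ℝ)
    (hr : ∀ i, 0 < r i) (hl : ∀ i, 0 < l i)
    (hright : B.mulVec r = lam • r) (hleft : B.vecMul l = lam • l)
    (hnorm : ∑ i, r i * l i = 1) :
    (-∑ i, ∑ j, (r i * l i) * (B i j * r j / (lam * r i)) *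
        Real.log (B i j * r j / (lam * r i)))
      + ∑ i, ∑ j, (r i * l i) * (B i j * r j / (lam * r i)) * Φ i j
    = Real.log lam := by
  have hr0 : ∀ i, r i ≠ 0 := fun i => (hr i).ne'
  have hlam0 : lam ≠ 0 := hlam.ne'
  -- row sums of P are 1
  have hrow : ∀ i, ∑ j, B i j * r j / (lam * r i) = 1 := by
    intro i
    have hs : ∑ j, B i j * r j = lam * r i := by
      have := congrFun hright i
      simpa [Matrix.mulVec, dotProduct, smul_eq_mul] using this
    rw [← Finset.sum_div, hs, div_self (mul_pos hlam (hr i)).ne']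
  -- column sums: ∑ i, p i * P i j = r j * l j
  have hcol : ∀ j, ∑ i, (r i * l i) * (B i j * r j / (lam * r i)) = r j * l j := by
    intro j
    have hv : ∑ i, l i * B i j = lam * l j := by
      have := congrFun hleft j
      simpa [Matrix.vecMul, dotProduct, smul_eq_mul] using this
    have hterm : ∀ i, (r i * l i) * (B i j * r j / (lam * r i))
        = (l i * B i j) * (r j / lam) := by
      intro i
      field_simp
      rw [div_eq_iff (hr0 i)]
      ring
    rw [Finset.sum_congr rfl fun i _ => hterm i, ← Finset.sum_mul, hv]
    field_simp
  -- termwise identity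
  have key : ∀ i j,
      -((r i * l i) * (B i j * r j / (lam * r i)) *
          Real.log (B i j * r j / (lam * r i)))
        + (r i * l i) * (B i j * r j / (lam * r i)) * Φ i j
      = (r i * l i) * (B i j * r j / (lam * r i)) *
          (Real.log lam + Real.log (r i)) -
        (r i * l i) * (B i j * r j / (lam * r i)) * Real.log (r j) := by
    intro i j
    by_cases hA : A i j
    · have hBij : B i j = Real.exp (Φ i j) := by rw [hB]; simp [hA]
      have hlog : Real.log (B i j * r j / (lam * r i))
          = Φ i j + Real.log (r j) - (Real.log lam + Real.log (r i)) := by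
        rw [hBij, Real.log_div (mul_pos (Real.exp_pos _) (hr j)).ne' (mul_pos hlam (hr i)).ne',
          Real.log_mul (Real.exp_ne_zero _) (hr0 j), Real.log_exp,
          Real.log_mul hlam0 (hr0 i)]
      rw [hlog]; ring
    · have hBij : B i j = 0 := by rw [hB]; simp [hA]
      simp [hBij]
  have expand :
      (-∑ i, ∑ j, (r i * l i) * (B i j * r j / (lam * r i)) *
          Real.log (B i j * r j / (lam * r i)))
        + ∑ i, ∑ j, (r i * l i) * (B i j * r j / (lam * r i)) * Φ i j
      = ∑ i, ∑ j,
          (-((r i * l i) * (B i j * r j / (lam * r i)) *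
              Real.log (B i j * r j / (lam * r i)))
            + (r i * l i) * (B i j * r j / (lam * r i)) * Φ i j) := by
    simp [Finset.sum_add_distrib, Finset.sum_neg_distrib]
  rw [expand]
  have step1 : ∀ i, ∑ j, (r i * l i) * (B i j * r j / (lam * r i)) *
      (Real.log lam + Real.log (r i))
      = (r i * l i) * (Real.log lam + Real.log (r i)) := by
    intro i
    have : ∑ j, (r i * l i) * (B i j * r j / (lam * r i)) *
        (Real.log lam + Real.log (r i))
        = ((r i * l i) * (Real.log lam + Real.log (r i))) *
            ∑ j, B i j * r j / (lam * r i) := by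
      rw [Finset.mul_sum]; exact Finset.sum_congr rfl fun j _ => by ring
    rw [this, hrow i, mul_one]
  have step2 : ∑ i, ∑ j, (r i * l i) * (B i j * r j / (lam * r i)) *
      Real.log (r j) = ∑ j, (r j * l j) * Real.log (r j) := by
    rw [Finset.sum_comm]
    refine Finset.sum_congr rfl fun j _ => ?_
    rw [← Finset.sum_mul, hcol j]
  calc ∑ i, ∑ j,
        (-((r i * l i) * (B i j * r j / (lam * r i)) *
            Real.log (B i j * r j / (lam * r i)))
          + (r i * l i) * (B i j * r j / (lam * r i)) * Φ i j)
      = ∑ i, ∑ j,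
          ((r i * l i) * (B i j * r j / (lam * r i)) *
              (Real.log lam + Real.log (r i)) -
            (r i * l i) * (B i j * r j / (lam * r i)) * Real.log (r j)) := by
        exact Finset.sum_congr rfl fun i _ =>
          Finset.sum_congr rfl fun j _ => key i j
    _ = (∑ i, ∑ j, (r i * l i) * (B i j * r j / (lam * r i)) *
            (Real.log lam + Real.log (r i)))
        - ∑ i, ∑ j, (r i * l i) * (B i j * r j / (lam * r i)) *
            Real.log (r j) := by
        rw [← Finset.sum_sub_distrib]
        exact Finset.sum_congr rfl fun i _ => Finset.sum_sub_distrib _ _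
    _ = (∑ i, (r i * l i) * (Real.log lam + Real.log (r i)))
        - ∑ j, (r j * l j) * Real.log (r j) := by
        rw [step2]
        congr 1
        exact Finset.sum_congr rfl fun i _ => step1 i
    _ = Real.log lam := by
        have : ∑ i, (r i * l i) * (Real.log lam + Real.log (r i))
            = (∑ i, r i * l i) * Real.log lam
              + ∑ i, (r i * l i) * Real.log (r i) := by
          rw [Finset.sum_mul, ← Finset.sum_add_distrib]
          exact Finset.sum_congr rfl fun i _ => by ring
        rw [this, hnorm, one_mul]
        ring
end
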